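/- arXiv:1306.0509 — 4 statements merged into one kernel-verified Lean document; each statement's English description precedes it below -/
import Mathlib

section
/- For real numbers x, y with 0 ≤ x < 1 and 0 ≤ y < 1, and parameters α, β, β', γ with 0 < α and α < γ, the integral ∫₀¹ u^(α-1)(1-u)^(γ-α-1)(1-ux)^(-β)(1-uy)^(-β') du equals (Γ(α)Γ(γ-α)/Γ(γ)) · ∑_{m,n≥0} ((α)_{m+n}(β)_m(β')_n / ((γ)_{m+n} m! n!)) xᵐ yⁿ, where the double series converges absolutely. -/
open MeasureTheory Real

/-- Pochhammer symbol `(a)_n = a(a+1)⋯(a+n-1)`. -/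
noncomputable def poch (a : ℝ) (n : ℕ) : ℝ := ∏ i ∈ Finset.range n, (a + i)

/-- Term of the Appell `F₁` double series. -/
noncomputable def appellTerm (α β β' γ x y : ℝ) (p : ℕ × ℕ) : ℝ :=
  poch α (p.1 + p.2) * poch β p.1 * poch β' p.2 /
    (poch γ (p.1 + p.2) * p.1.factorial * p.2.factorial) * x ^ p.1 * y ^ p.2

lemma poch_zero (a : ℝ) : poch a 0 = 1 := by simp [poch]

lemma poch_succ (a : ℝ) (n : ℕ) : poch a (n + 1) = poch a n * (a + n) :=
  Finset.prod_range_succ _ _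

lemma poch_pos {a : ℝ} (ha : 0 < a) (n : ℕ) : 0 < poch a n :=
  Finset.prod_pos fun i _ => by positivity

lemma poch_le_poch {a b : ℝ} (ha : 0 < a) (hab : a ≤ b) (n : ℕ) :
    poch a n ≤ poch b n :=
  Finset.prod_le_prod (fun i _ => by positivity) (fun i _ => by linarith)

/-- Master summability lemma. -/
lemma summable_master (β : ℝ) {s : ℝ} (h0 : 0 ≤ s) (h1 : s < 1) :
    Summable (fun m : ℕ => |poch β m| * (m + 1 + |β|) / m.factorial * s ^ m) := by
  obtain ⟨q, hsq, hq1⟩ : ∃ q : ℝ, s < q ∧ q < 1 := ⟨(1 + s) / 2, by linarith, by linarith⟩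
  have hq0 : 0 < q := h0.trans_lt hsq
  apply summable_of_ratio_norm_eventually_le hq1
  have hN : ∀ᶠ m : ℕ in Filter.atTop, s * (2 + |β|) ≤ (q - s) * m := by
    have h2 : Filter.Tendsto (fun m : ℕ => (q - s) * m) Filter.atTop Filter.atTop :=
      (tendsto_natCast_atTop_atTop (R := ℝ)).const_mul_atTop (by linarith)
    exact h2.eventually_ge_atTop _
  filter_upwards [hN] with m hm
  have hfac : (0:ℝ) < m.factorial := by positivity
  have key : |β + m| * ((m + 2 + |β|) * s) ≤ q * ((m + 1) * (m + 1 + |β|)) := by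
    have h2 : |β + (m:ℝ)| ≤ m + 1 + |β| := by
      calc |β + (m:ℝ)| ≤ |β| + m := by
            simpa [add_comm] using abs_add_le β (m:ℝ)
        _ ≤ m + 1 + |β| := by linarith
    have h3 : ((m:ℝ) + 2 + |β|) * s ≤ q * (m + 1) := by nlinarith [abs_nonneg β]
    calc |β + m| * ((m + 2 + |β|) * s) ≤ (m + 1 + |β|) * (q * (m+1)) :=
          mul_le_mul h2 h3 (by positivity) (by positivity)
      _ = q * ((m + 1) * (m + 1 + |β|)) := by ring
  have L : ‖|poch β (m+1)| * ((m+1) + 1 + |β|) / (m+1).factorial * s ^ (m+1)‖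
      = |poch β (m+1)| * ((m+1) + 1 + |β|) / (m+1).factorial * s ^ (m+1) :=
    Real.norm_of_nonneg (by positivity)
  have R : ‖|poch β m| * (m + 1 + |β|) / m.factorial * s ^ m‖
      = |poch β m| * (m + 1 + |β|) / m.factorial * s ^ m :=
    Real.norm_of_nonneg (by positivity)
  push_cast
  rw [L, R]
  have e1 : |poch β (m+1)| = |poch β m| * |β + m| := by
    rw [poch_succ, abs_mul]
  have e2 : ((m+1).factorial : ℝ) = (m+1) * m.factorial := by
    push_cast [Nat.factorial_succ]; ring
  rw [e1, e2, pow_succ]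
  rw [div_mul_eq_mul_div, div_mul_eq_mul_div, mul_div_assoc']
  rw [div_le_div_iff₀ (by positivity) (by positivity)]
  have hnn : (0:ℝ) ≤ |poch β m| * s ^ m * ↑m.factorial := by positivity
  have key2 := mul_le_mul_of_nonneg_left key hnn
  calc |poch β m| * |β + ↑m| * (↑m + 1 + 1 + |β|) * (s ^ m * s) * ↑m.factorial
      = (|poch β m| * s ^ m * ↑m.factorial) * (|β + ↑m| * ((↑m + 2 + |β|) * s)) := by ring
    _ ≤ (|poch β m| * s ^ m * ↑m.factorial) * (q * ((↑m + 1) * (↑m + 1 + |β|))) := key2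
    _ = q * (|poch β m| * (↑m + 1 + |β|) * s ^ m) * ((↑m + 1) * ↑m.factorial) := by ring

lemma summable_abs_poch (β : ℝ) {s : ℝ} (h0 : 0 ≤ s) (h1 : s < 1) :
    Summable (fun m : ℕ => |poch β m| / m.factorial * s ^ m) := by
  refine (summable_master β h0 h1).of_nonneg_of_le (fun m => by positivity) (fun m => ?_)
  have h2 : (1:ℝ) ≤ m + 1 + |β| := by
    have := abs_nonneg β; have : (0:ℝ) ≤ m := Nat.cast_nonneg m; linarith [abs_nonneg β]
  calc |poch β m| / m.factorial * s ^ m = |poch β m| * 1 / m.factorial * s ^ m := by ring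
    _ ≤ |poch β m| * (m + 1 + |β|) / m.factorial * s ^ m := by gcongr

lemma summable_abs_poch_mul (β : ℝ) {s : ℝ} (h0 : 0 ≤ s) (h1 : s < 1) :
    Summable (fun m : ℕ => |poch β m| * |β + m| / m.factorial * s ^ m) := by
  refine (summable_master β h0 h1).of_nonneg_of_le (fun m => by positivity) (fun m => ?_)
  gcongr
  calc |β + (m:ℝ)| ≤ |β| + m := by simpa [add_comm] using abs_add_le β (m:ℝ)
    _ ≤ m + 1 + |β| := by linarith

lemma summable_abs_poch_mul_nat (β : ℝ) {s : ℝ} (h0 : 0 ≤ s) (h1 : s < 1) :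
    Summable (fun m : ℕ => |poch β m| * m / m.factorial * s ^ m) := by
  refine (summable_master β h0 h1).of_nonneg_of_le (fun m => by positivity) (fun m => ?_)
  gcongr
  linarith [abs_nonneg β]

lemma summable_deriv_bound (β : ℝ) {r : ℝ} (h0 : 0 < r) (h1 : r < 1) :
    Summable (fun m : ℕ => |poch β m| / m.factorial * (m * r ^ (m - 1))) := by
  refine ((summable_master β h0.le h1).mul_left r⁻¹).of_nonneg_of_le
    (fun m => by positivity) (fun m => ?_)
  have key : (m:ℝ) * r ^ (m - 1) ≤ (m + 1 + |β|) * r ^ m / r := by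
    cases m with
    | zero => simp; positivity
    | succ k =>
      rw [pow_succ]
      have h2 : ((k:ℝ) + 1) ≤ (k + 1 + 1 + |β|) := by
        have := abs_nonneg β; linarith
      calc ((k+1:ℕ):ℝ) * r ^ ((k+1) - 1) = (k + 1) * r ^ k := by push_cast; ring
        _ ≤ (((k+1:ℕ):ℝ) + 1 + |β|) * r ^ k := by
            apply mul_le_mul_of_nonneg_right _ (by positivity)
            push_cast; linarith
        _ = (((k+1:ℕ):ℝ) + 1 + |β|) * (r ^ k * r) / r := by
            field_simp
  calc |poch β m| / m.factorial * (m * r ^ (m - 1))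
      ≤ |poch β m| / m.factorial * ((m + 1 + |β|) * r ^ m / r) := by
        apply mul_le_mul_of_nonneg_left key (by positivity)
    _ = r⁻¹ * (|poch β m| * (m + 1 + |β|) / m.factorial * r ^ m) := by
        field_simp

lemma summable_binomial (β : ℝ) {z : ℝ} (hz : |z| < 1) :
    Summable (fun m : ℕ => poch β m / m.factorial * z ^ m) := by
  apply Summable.of_abs
  refine (summable_abs_poch β (abs_nonneg z) hz).congr fun m => ?_
  rw [abs_mul, abs_div, abs_pow, Nat.abs_cast]

/-- The key ODE identity `(1 - z) * D z = β * f z`. -/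
lemma ode_identity (β : ℝ) {z : ℝ} (hz : |z| < 1) :
    (1 - z) * (∑' m : ℕ, poch β m / m.factorial * ((m : ℝ) * z ^ (m - 1)))
      = β * ∑' m : ℕ, poch β m / m.factorial * z ^ m := by
  set d : ℕ → ℝ := fun m => poch β m / m.factorial * ((m : ℝ) * z ^ (m - 1)) with hd
  set e : ℕ → ℝ := fun m => poch β (m + 1) / m.factorial * z ^ m with he
  set w : ℕ → ℝ := fun m => poch β m * m / m.factorial * z ^ m with hw
  have sE : Summable e := by
    apply Summable.of_abs
    refine (summable_abs_poch_mul β (abs_nonneg z) hz).congr fun m => ?_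
    simp only [he, poch_succ, abs_mul, abs_div, abs_pow, Nat.abs_cast]
  have sW : Summable w := by
    apply Summable.of_abs
    refine (summable_abs_poch_mul_nat β (abs_nonneg z) hz).congr fun m => ?_
    simp only [hw, abs_mul, abs_div, abs_pow, Nat.abs_cast]
  have sF : Summable (fun m : ℕ => poch β m / m.factorial * z ^ m) := summable_binomial β hz
  have hde : ∀ m : ℕ, d (m + 1) = e m := by
    intro m
    simp only [hd, he, Nat.add_sub_cancel, poch_succ, Nat.factorial_succ]
    push_cast
    have h1 : ((m:ℝ) + 1) ≠ 0 := by positivity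
    have h2 : ((m.factorial:ℝ)) ≠ 0 := by positivity
    field_simp
  have sD : Summable d := by
    rw [← summable_nat_add_iff 1]
    exact sE.congr fun m => (hde m).symm
  have hD1 : ∑' m, d m = ∑' m, e m := by
    rw [Summable.tsum_eq_zero_add sD]
    simp only [hde]
    have h0 : d 0 = 0 := by simp [hd]
    rw [h0, zero_add]
  have hzw : ∀ m : ℕ, z * e m = w (m + 1) := by
    intro m
    simp only [he, hw, Nat.factorial_succ, poch_succ, pow_succ]
    push_cast
    have h1 : ((m:ℝ) + 1) ≠ 0 := by positivity
    have h2 : ((m.factorial:ℝ)) ≠ 0 := by positivity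
    field_simp
  have hD2 : z * ∑' m, e m = ∑' m, w m := by
    rw [← tsum_mul_left]
    rw [Summable.tsum_eq_zero_add sW]
    have h0 : w 0 = 0 := by simp [hw]
    rw [h0, zero_add]
    exact tsum_congr hzw
  have hew : ∀ m : ℕ, e m - w m = β * (poch β m / m.factorial * z ^ m) := by
    intro m
    simp only [he, hw, poch_succ]
    have h2 : ((m.factorial:ℝ)) ≠ 0 := by positivity
    field_simp
    ring
  calc (1 - z) * ∑' m, d m = (∑' m, e m) - z * ∑' m, e m := by rw [hD1]; ring
    _ = (∑' m, e m) - ∑' m, w m := by rw [hD2]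
    _ = ∑' m, (e m - w m) := (Summable.tsum_sub sE sW).symm
    _ = ∑' m, β * (poch β m / m.factorial * z ^ m) := tsum_congr hew
    _ = β * ∑' m, poch β m / m.factorial * z ^ m := tsum_mul_left

lemma hasSum_binomial (β : ℝ) {t : ℝ} (h0 : 0 ≤ t) (h1 : t < 1) :
    HasSum (fun m : ℕ => poch β m / m.factorial * t ^ m) ((1 - t) ^ (-β)) := by
  have habs : |t| < 1 := by rw [abs_of_nonneg h0]; exact h1
  obtain ⟨r, htr, hr1⟩ : ∃ r : ℝ, t < r ∧ r < 1 := ⟨(1 + t) / 2, by linarith, by linarith⟩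
  have hr0 : 0 < r := h0.trans_lt htr
  set f : ℝ → ℝ := fun z => ∑' m : ℕ, poch β m / m.factorial * z ^ m with hf
  -- derivative of f on Ioo (-r) r
  have hderiv : ∀ z ∈ Set.Ioo (-r) r,
      HasDerivAt f (∑' m : ℕ, poch β m / m.factorial * ((m : ℝ) * z ^ (m - 1))) z := by
    intro z hzT
    apply hasDerivAt_tsum_of_isPreconnected (summable_deriv_bound β hr0 hr1)
      isOpen_Ioo (convex_Ioo _ _).isPreconnected
      (g := fun (m : ℕ) (z : ℝ) => poch β m / m.factorial * z ^ m)
      (g' := fun (m : ℕ) (z : ℝ) => poch β m / m.factorial * ((m : ℝ) * z ^ (m - 1)))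
      (fun m y _ => (hasDerivAt_pow m y).const_mul _)
      ?_ (Set.mem_Ioo.2 ⟨by linarith, hr0⟩) ?_ hzT
    · intro m y hy
      have hyr : |y| ≤ r := by
        rw [abs_le]; exact ⟨(Set.mem_Ioo.1 hy).1.le, (Set.mem_Ioo.1 hy).2.le⟩
      rw [Real.norm_eq_abs, abs_mul, abs_mul, abs_div, abs_pow, Nat.abs_cast, Nat.abs_cast]
      gcongr
    · apply summable_of_ne_finset_zero (s := {0})
      intro m hm
      simp only [Finset.mem_singleton] at hm
      simp [zero_pow hm]
  -- the function g = (1-z)^β * f z has zero derivative on [0, t]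
  have hsub : Set.Icc (0:ℝ) t ⊆ Set.Ioo (-r) r := fun z hz =>
    ⟨by linarith [hz.1], by linarith [hz.2]⟩
  have hg0 : ∀ z ∈ Set.Icc (0:ℝ) t, HasDerivAt (fun z => (1 - z) ^ β * f z) 0 z := by
    intro z hz
    have hz1 : 0 < 1 - z := by linarith [hz.2]
    have hzabs : |z| < 1 := by rw [abs_of_nonneg hz.1]; linarith [hz.2]
    have hDf := hderiv z (hsub hz)
    have hrw : HasDerivAt (fun z : ℝ => (1 - z) ^ β) (-1 * β * (1 - z) ^ (β - 1)) z := by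
      have h1 : HasDerivAt (fun z : ℝ => 1 - z) (-1) z := by
        simpa using (hasDerivAt_id z).const_sub 1
      exact h1.rpow_const (Or.inl hz1.ne')
    have := hrw.mul hDf
    refine this.congr_deriv ?_
    symm
    have hode := ode_identity β hzabs
    have hpow : (1 - z) ^ β = (1 - z) ^ (β - 1) * (1 - z) := by
      rw [← Real.rpow_add_one hz1.ne' (β - 1)]; ring_nf
    rw [hpow]
    show (0:ℝ) = -1 * β * (1 - z) ^ (β - 1) * (∑' m : ℕ, poch β m / m.factorial * z ^ m)
      + (1 - z) ^ (β - 1) * (1 - z) * ∑' m : ℕ, poch β m / m.factorial * ((m : ℝ) * z ^ (m - 1))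
    linear_combination (-((1 - z) ^ (β - 1))) * hode
  have key : (1 - t) ^ β * f t = 1 := by
    have hcont : ContinuousOn (fun z => (1 - z) ^ β * f z) (Set.Icc 0 t) :=
      fun z hz => ((hg0 z hz).continuousAt).continuousWithinAt
    have hder : ∀ z ∈ Set.Ico (0:ℝ) t, HasDerivWithinAt (fun z => (1 - z) ^ β * f z) 0 (Set.Ici z) z :=
      fun z hz => ((hg0 z ⟨hz.1, hz.2.le⟩).hasDerivWithinAt)
    have := constant_of_has_deriv_right_zero hcont hder t (Set.mem_Icc.2 ⟨h0, le_refl t⟩)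
    rw [this]
    have hf0 : f 0 = 1 := by
      show ∑' (m : ℕ), poch β m / (m.factorial:ℝ) * (0:ℝ) ^ m = 1
      rw [tsum_eq_single 0 (fun m hm => by simp [zero_pow hm])]
      simp [poch_zero]
    show (1 - 0 : ℝ) ^ β * f 0 = 1
    simp [hf0]
  have hft : f t = (1 - t) ^ (-β) := by
    have hb : (0:ℝ) < 1 - t := by linarith
    rw [Real.rpow_neg hb.le]
    exact eq_inv_of_mul_eq_one_left (by linear_combination key)
  have h2 := (summable_binomial β habs).hasSum
  have hft' : (∑' (b : ℕ), poch β b / (b.factorial:ℝ) * t ^ b) = (1 - t) ^ (-β) := hft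
  rwa [hft'] at h2

lemma complex_eq_real_beta {a b : ℝ} (u : ℝ) (hu : u ∈ Set.Ioc (0:ℝ) 1) :
    (u:ℂ) ^ ((a:ℂ) - 1) * ((1:ℂ) - u) ^ ((b:ℂ) - 1)
      = ((u ^ (a - 1) * (1 - u) ^ (b - 1) : ℝ) : ℂ) := by
  have h1 : (0:ℝ) ≤ u := hu.1.le
  have h2 : (0:ℝ) ≤ 1 - u := by linarith [hu.2]
  rw [show ((a:ℂ) - 1) = ((a - 1 : ℝ) : ℂ) by push_cast; ring,
    show ((b:ℂ) - 1) = ((b - 1 : ℝ) : ℂ) by push_cast; ring,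
    show ((1:ℂ) - u) = ((1 - u : ℝ) : ℂ) by push_cast; ring,
    ← Complex.ofReal_cpow h1, ← Complex.ofReal_cpow h2]
  push_cast
  ring

lemma beta_integrable {a b : ℝ} (ha : 0 < a) (hb : 0 < b) :
    IntegrableOn (fun u : ℝ => u ^ (a - 1) * (1 - u) ^ (b - 1)) (Set.Ioc 0 1) := by
  have hC : IntegrableOn (fun u : ℝ => (u:ℂ) ^ ((a:ℂ) - 1) * ((1:ℂ) - u) ^ ((b:ℂ) - 1))
      (Set.Ioc 0 1) := by
    have := Complex.betaIntegral_convergent (u := a) (v := b) (by simpa using ha) (by simpa using hb)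
    exact (intervalIntegrable_iff_integrableOn_Ioc_of_le zero_le_one).mp this
  have hre : Integrable (fun u : ℝ => ((u:ℂ) ^ ((a:ℂ) - 1) * ((1:ℂ) - u) ^ ((b:ℂ) - 1)).re)
      (volume.restrict (Set.Ioc 0 1)) := hC.re
  refine hre.congr ?_
  filter_upwards [ae_restrict_mem measurableSet_Ioc] with u hu
  rw [complex_eq_real_beta (a := a) (b := b) u hu, Complex.ofReal_re]

lemma beta_value {a b : ℝ} (ha : 0 < a) (hb : 0 < b) :
    Complex.betaIntegral a b = ((Real.Gamma a * Real.Gamma b / Real.Gamma (a + b) : ℝ) : ℂ) := by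
  have h := Complex.Gamma_mul_Gamma_eq_betaIntegral
    (s := (a:ℂ)) (t := (b:ℂ)) (by simpa using ha) (by simpa using hb)
  rw [show ((a:ℂ) + b) = ((a + b : ℝ) : ℂ) by push_cast; ring] at h
  rw [Complex.Gamma_ofReal, Complex.Gamma_ofReal, Complex.Gamma_ofReal] at h
  have hne : ((Real.Gamma (a + b) : ℂ)) ≠ 0 := by
    simpa using (Real.Gamma_pos_of_pos (by linarith)).ne'
  rw [Complex.ofReal_div, Complex.ofReal_mul, h, mul_div_cancel_left₀ _ hne]

lemma beta_integral_eval {a b : ℝ} (ha : 0 < a) (hb : 0 < b) :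
    ∫ u in Set.Ioc (0:ℝ) 1, u ^ (a - 1) * (1 - u) ^ (b - 1)
      = Real.Gamma a * Real.Gamma b / Real.Gamma (a + b) := by
  have h1 : ((∫ u in Set.Ioc (0:ℝ) 1, u ^ (a - 1) * (1 - u) ^ (b - 1) : ℝ) : ℂ)
      = ∫ u in Set.Ioc (0:ℝ) 1, ((u ^ (a - 1) * (1 - u) ^ (b - 1) : ℝ) : ℂ) :=
    integral_ofReal.symm
  have h2 : ∫ u in Set.Ioc (0:ℝ) 1, ((u ^ (a - 1) * (1 - u) ^ (b - 1) : ℝ) : ℂ)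
      = ∫ u in Set.Ioc (0:ℝ) 1, (u:ℂ) ^ ((a:ℂ) - 1) * ((1:ℂ) - u) ^ ((b:ℂ) - 1) := by
    apply integral_congr_ae
    filter_upwards [ae_restrict_mem measurableSet_Ioc] with u hu
    rw [complex_eq_real_beta (a := a) (b := b) u hu]
  have h3 : ∫ u in Set.Ioc (0:ℝ) 1, (u:ℂ) ^ ((a:ℂ) - 1) * ((1:ℂ) - u) ^ ((b:ℂ) - 1)
      = Complex.betaIntegral a b := by
    rw [Complex.betaIntegral, intervalIntegral.integral_of_le zero_le_one]
  have h4 := h1.trans ((h2.trans h3).trans (beta_value ha hb))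
  exact_mod_cast h4

lemma Gamma_add_nat {a : ℝ} (ha : 0 < a) (k : ℕ) :
    Real.Gamma (a + k) = Real.Gamma a * poch a k := by
  induction k with
  | zero => simp [poch_zero]
  | succ n ih =>
    have h : a + ((n:ℕ) + 1 : ℕ) = (a + n) + 1 := by push_cast; ring
    have hne : a + (n:ℝ) ≠ 0 := by positivity
    rw [h, Real.Gamma_add_one hne, ih, poch_succ]
    ring

lemma J_eval {α γ : ℝ} (hα : 0 < α) (hαγ : α < γ) (k : ℕ) :
    ∫ u in Set.Ioc (0:ℝ) 1, u ^ (α + (k:ℝ) - 1) * (1 - u) ^ (γ - α - 1)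
      = (Real.Gamma α * Real.Gamma (γ - α) / Real.Gamma γ) * (poch α k / poch γ k) := by
  have hγ : 0 < γ := hα.trans hαγ
  have hb : 0 < γ - α := by linarith
  have ha : 0 < α + (k:ℝ) := by positivity
  have h := beta_integral_eval (a := α + k) (b := γ - α) ha hb
  rw [show α + (k:ℝ) + (γ - α) = γ + k by ring] at h
  rw [h, Gamma_add_nat hα k, Gamma_add_nat hγ k]
  have h1 : Real.Gamma γ ≠ 0 := (Real.Gamma_pos_of_pos hγ).ne'
  have h2 : poch γ k ≠ 0 := (poch_pos hγ k).ne'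
  field_simp

/-- Euler-type integral representation of Appell's first hypergeometric function:
for `0 ≤ x < 1`, `0 ≤ y < 1`, `0 < α < γ`, the double series converges absolutely and
`∫₀¹ u^(α-1)(1-u)^(γ-α-1)(1-ux)^(-β)(1-uy)^(-β') du = Γ(α)Γ(γ-α)/Γ(γ) · F₁(α,β,β';γ;x,y)`. -/
theorem integral_rep_appellF1 (α β β' γ x y : ℝ)
    (hx0 : 0 ≤ x) (hx1 : x < 1) (hy0 : 0 ≤ y) (hy1 : y < 1)
    (hα : 0 < α) (hαγ : α < γ) :
    Summable (fun p : ℕ × ℕ => |appellTerm α β β' γ x y p|) ∧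
    ∫ u in (0:ℝ)..1,
        u ^ (α - 1) * (1 - u) ^ (γ - α - 1) * (1 - u * x) ^ (-β) * (1 - u * y) ^ (-β')
      = (Real.Gamma α * Real.Gamma (γ - α) / Real.Gamma γ) *
          ∑' p : ℕ × ℕ, appellTerm α β β' γ x y p := by
  have hγ : 0 < γ := hα.trans hαγ
  have hb : 0 < γ - α := by linarith
  have hCpos : 0 < Real.Gamma α * Real.Gamma (γ - α) / Real.Gamma γ :=
    div_pos (mul_pos (Real.Gamma_pos_of_pos hα) (Real.Gamma_pos_of_pos hb))
      (Real.Gamma_pos_of_pos hγ)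
  have hAT : ∀ p : ℕ × ℕ, appellTerm α β β' γ x y p
      = (poch α (p.1 + p.2) / poch γ (p.1 + p.2)) *
        ((poch β p.1 / p.1.factorial) * x ^ p.1 * ((poch β' p.2 / p.2.factorial) * y ^ p.2)) := by
    intro p
    simp only [appellTerm]
    ring
  have hATabs : ∀ p : ℕ × ℕ, |appellTerm α β β' γ x y p|
      = (poch α (p.1 + p.2) / poch γ (p.1 + p.2)) *
        ((|poch β p.1| / p.1.factorial) * x ^ p.1 * ((|poch β' p.2| / p.2.factorial) * y ^ p.2)) := by
    intro p
    rw [hAT p]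
    simp only [abs_mul, abs_div, abs_pow, Nat.abs_cast,
      abs_of_nonneg hx0, abs_of_nonneg hy0, abs_of_pos (poch_pos hα _),
      abs_of_pos (poch_pos hγ _)]
  have hprod : Summable (fun p : ℕ × ℕ =>
      (|poch β p.1| / p.1.factorial * x ^ p.1) * (|poch β' p.2| / p.2.factorial * y ^ p.2)) :=
    (summable_abs_poch β hx0 hx1).mul_of_nonneg (summable_abs_poch β' hy0 hy1)
      (fun m => by positivity) (fun n => by positivity)
  have S1 : Summable (fun p : ℕ × ℕ => |appellTerm α β β' γ x y p|) := by
    refine hprod.of_nonneg_of_le (fun p => abs_nonneg _) (fun p => ?_)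
    rw [hATabs p]
    have h1 : poch α (p.1 + p.2) / poch γ (p.1 + p.2) ≤ 1 :=
      div_le_one_of_le₀ (poch_le_poch hα hαγ.le _) (poch_pos hγ _).le
    calc (poch α (p.1 + p.2) / poch γ (p.1 + p.2)) *
          ((|poch β p.1| / p.1.factorial) * x ^ p.1 * ((|poch β' p.2| / p.2.factorial) * y ^ p.2))
        ≤ 1 * ((|poch β p.1| / p.1.factorial) * x ^ p.1 * ((|poch β' p.2| / p.2.factorial) * y ^ p.2)) :=
          mul_le_mul_of_nonneg_right h1 (by positivity)
      _ = (|poch β p.1| / p.1.factorial * x ^ p.1) * (|poch β' p.2| / p.2.factorial * y ^ p.2) := by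
          ring
  refine ⟨S1, ?_⟩
  set f : ℕ × ℕ → ℝ → ℝ := fun p u =>
    (poch β p.1 / p.1.factorial * x ^ p.1 * (poch β' p.2 / p.2.factorial * y ^ p.2)) *
      (u ^ (α + ((p.1 + p.2 : ℕ) : ℝ) - 1) * (1 - u) ^ (γ - α - 1)) with hf
  have key : ∀ u ∈ Set.Ioc (0:ℝ) 1, HasSum (fun p => f p u)
      (u ^ (α - 1) * (1 - u) ^ (γ - α - 1) * (1 - u * x) ^ (-β) * (1 - u * y) ^ (-β')) := by
    intro u hu
    have hu0 : 0 < u := hu.1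
    have hu1 : u ≤ 1 := hu.2
    have hux0 : 0 ≤ u * x := by positivity
    have hux1 : u * x < 1 := lt_of_le_of_lt (mul_le_of_le_one_left hx0 hu1) hx1
    have huy0 : 0 ≤ u * y := by positivity
    have huy1 : u * y < 1 := lt_of_le_of_lt (mul_le_of_le_one_left hy0 hu1) hy1
    have hX := hasSum_binomial β hux0 hux1
    have hY := hasSum_binomial β' huy0 huy1
    have hnX : Summable (fun m : ℕ => ‖poch β m / m.factorial * (u * x) ^ m‖) := by
      refine (summable_abs_poch β hux0 hux1).congr fun m => ?_
      rw [Real.norm_eq_abs, abs_mul, abs_div, Nat.abs_cast, abs_pow, abs_of_nonneg hux0]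
    have hnY : Summable (fun m : ℕ => ‖poch β' m / m.factorial * (u * y) ^ m‖) := by
      refine (summable_abs_poch β' huy0 huy1).congr fun m => ?_
      rw [Real.norm_eq_abs, abs_mul, abs_div, Nat.abs_cast, abs_pow, abs_of_nonneg huy0]
    have hprod2 := hX.mul hY ((hnX.mul_norm hnY).of_norm)
    have h2 := hprod2.mul_left (u ^ (α - 1) * (1 - u) ^ (γ - α - 1))
    have hfun : (fun p : ℕ × ℕ => u ^ (α - 1) * (1 - u) ^ (γ - α - 1) *
        ((poch β p.1 / p.1.factorial * (u * x) ^ p.1) *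
          (poch β' p.2 / p.2.factorial * (u * y) ^ p.2)))
        = fun p => f p u := by
      funext p
      simp only [hf]
      have hexp : u ^ (α + ((p.1 + p.2 : ℕ) : ℝ) - 1) = u ^ (α - 1) * u ^ (p.1 + p.2) := by
        rw [← Real.rpow_natCast u (p.1 + p.2), ← Real.rpow_add hu0]
        congr 1
        ring
      rw [hexp, pow_add, mul_pow, mul_pow]
      ring
    rw [hfun] at h2
    have hval : u ^ (α - 1) * (1 - u) ^ (γ - α - 1) * (1 - u * x) ^ (-β) * (1 - u * y) ^ (-β')
        = u ^ (α - 1) * (1 - u) ^ (γ - α - 1) * ((1 - u * x) ^ (-β) * (1 - u * y) ^ (-β')) := by ring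
    rw [hval]; exact h2
  have hInt : ∀ p : ℕ × ℕ, Integrable (f p) (volume.restrict (Set.Ioc 0 1)) := by
    intro p
    simp only [hf]
    exact (beta_integrable (by positivity) hb).const_mul _
  have hIntegralNorm : ∀ p : ℕ × ℕ, ∫ u in Set.Ioc (0:ℝ) 1, ‖f p u‖
      = (Real.Gamma α * Real.Gamma (γ - α) / Real.Gamma γ) * |appellTerm α β β' γ x y p| := by
    intro p
    have h1 : Set.EqOn (fun u => ‖f p u‖)
        (fun u => (|poch β p.1| / p.1.factorial * x ^ p.1 *
            (|poch β' p.2| / p.2.factorial * y ^ p.2)) *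
          (u ^ (α + ((p.1 + p.2 : ℕ) : ℝ) - 1) * (1 - u) ^ (γ - α - 1)))
        (Set.Ioc 0 1) := by
      intro u hu
      have hbnn : 0 ≤ u ^ (α + ((p.1 + p.2 : ℕ) : ℝ) - 1) * (1 - u) ^ (γ - α - 1) :=
        mul_nonneg (Real.rpow_nonneg hu.1.le _) (Real.rpow_nonneg (by linarith [hu.2]) _)
      simp only [hf, Real.norm_eq_abs, abs_mul, abs_div, abs_pow, Nat.abs_cast,
        abs_of_nonneg hx0, abs_of_nonneg hy0, abs_of_nonneg hbnn,
        abs_of_nonneg (Real.rpow_nonneg hu.1.le (α + ((p.1 + p.2 : ℕ) : ℝ) - 1)),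
        abs_of_nonneg (Real.rpow_nonneg (by linarith [hu.2] : (0:ℝ) ≤ 1 - u) (γ - α - 1))]
    rw [setIntegral_congr_fun measurableSet_Ioc h1, MeasureTheory.integral_const_mul _ _,
      J_eval hα hαγ (p.1 + p.2), hATabs p]
    ring
  have hIntegralVal : ∀ p : ℕ × ℕ, ∫ u in Set.Ioc (0:ℝ) 1, f p u
      = (Real.Gamma α * Real.Gamma (γ - α) / Real.Gamma γ) * appellTerm α β β' γ x y p := by
    intro p
    simp only [hf]
    rw [MeasureTheory.integral_const_mul _ _, J_eval hα hαγ (p.1 + p.2), hAT p]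
    ring
  have hlin : ∑' p : ℕ × ℕ, ∫⁻ u in Set.Ioc (0:ℝ) 1, ‖f p u‖₊ ≠ ⊤ := by
    have h1 : ∀ p : ℕ × ℕ, ∫⁻ u in Set.Ioc (0:ℝ) 1, (‖f p u‖₊ : ENNReal)
        = ENNReal.ofReal
            ((Real.Gamma α * Real.Gamma (γ - α) / Real.Gamma γ) * |appellTerm α β β' γ x y p|) := by
      intro p
      simp only [← enorm_eq_nnnorm]
      rw [← ofReal_integral_norm_eq_lintegral_enorm (hInt p), hIntegralNorm p]
    simp only [h1]
    rw [← ENNReal.ofReal_tsum_of_nonneg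
      (fun p => mul_nonneg hCpos.le (abs_nonneg _)) (S1.mul_left _)]
    exact ENNReal.ofReal_ne_top
  have hswap := integral_tsum (fun p => (hInt p).aestronglyMeasurable) hlin
  rw [intervalIntegral.integral_of_le zero_le_one]
  have hL : ∫ u in Set.Ioc (0:ℝ) 1,
      (u ^ (α - 1) * (1 - u) ^ (γ - α - 1) * (1 - u * x) ^ (-β) * (1 - u * y) ^ (-β'))
      = ∫ u in Set.Ioc (0:ℝ) 1, ∑' p : ℕ × ℕ, f p u :=
    setIntegral_congr_fun measurableSet_Ioc (fun u hu => ((key u hu).tsum_eq).symm)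
  rw [hL, hswap]
  calc ∑' p : ℕ × ℕ, ∫ u in Set.Ioc (0:ℝ) 1, f p u
      = ∑' p : ℕ × ℕ, (Real.Gamma α * Real.Gamma (γ - α) / Real.Gamma γ) *
          appellTerm α β β' γ x y p := tsum_congr hIntegralVal
    _ = (Real.Gamma α * Real.Gamma (γ - α) / Real.Gamma γ) *
          ∑' p : ℕ × ℕ, appellTerm α β β' γ x y p := tsum_mul_left
end

section
/- Let a = b > c > 0 (an oblate spheroid x²/a² + y²/a² + z²/c² = 1). Then the surface area, given by 8·∫₀^a ∫₀^{a√(1−x²/a²)} √[(1 − δ x²/a² − δ y²/a²)/(1 − x²/a² − y²/a²)] dy dx with δ = 1 − c²/a², equals 2πa² + πc²·(1/√(1−c²/a²))·log((1+√(1−c²/a²))/(1−√(1−c²/a²))). -/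
open MeasureTheory Real Set


lemma g_bound (a δ r : ℝ) (ha : 0 < a) (hδ0 : 0 < δ) (hδ1 : δ < 1)
    (hr0 : 0 < r) (hra : r < a) :
    r * Real.sqrt ((1 - δ*r^2/a^2) / (1 - r^2/a^2))
      ≤ a * Real.sqrt a * (a - r) ^ (-(1:ℝ)/2) := by
  have hP : (0:ℝ) < 1 - r^2/a^2 := by
    rw [sub_pos, div_lt_one (by positivity)]; nlinarith
  have hnum : 1 - δ*r^2/a^2 ≤ 1 := by
    have : 0 ≤ δ*r^2/a^2 := by positivity
    linarith
  have h1 : Real.sqrt ((1 - δ*r^2/a^2) / (1 - r^2/a^2))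
      ≤ Real.sqrt (1 / (1 - r^2/a^2)) := by
    apply Real.sqrt_le_sqrt
    gcongr
  have heq : 1 / (1 - r^2/a^2) = a^2 / (a^2 - r^2) := by
    rw [div_eq_div_iff hP.ne' (by nlinarith : (0:ℝ) < a^2 - r^2).ne']
    field_simp
  have h2 : a^2 / (a^2 - r^2) ≤ a / (a - r) := by
    rw [div_le_div_iff₀ (by nlinarith) (by linarith)]
    nlinarith [mul_nonneg (mul_nonneg ha.le hr0.le) (sub_nonneg.2 hra.le)]
  have h3 : Real.sqrt (a / (a-r)) = Real.sqrt a * (a - r) ^ (-(1:ℝ)/2) := by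
    rw [Real.sqrt_div ha.le, Real.sqrt_eq_rpow (a - r), div_eq_mul_inv,
      ← Real.rpow_neg (by linarith : (0:ℝ) ≤ a - r)]
    norm_num
  calc r * Real.sqrt ((1 - δ*r^2/a^2) / (1 - r^2/a^2))
      ≤ a * Real.sqrt (a / (a - r)) := by
        apply mul_le_mul hra.le (h1.trans ?_) (Real.sqrt_nonneg _) ha.le
        rw [heq]
        exact Real.sqrt_le_sqrt h2
    _ = a * Real.sqrt a * (a - r) ^ (-(1:ℝ)/2) := by rw [h3, mul_assoc]

lemma g_integrable (a δ : ℝ) (ha : 0 < a) (hδ0 : 0 < δ) (hδ1 : δ < 1) :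
    IntervalIntegrable (fun r => r * Real.sqrt ((1 - δ*r^2/a^2) / (1 - r^2/a^2)))
      volume 0 a := by
  have hmeas : AEStronglyMeasurable
      (fun r : ℝ => r * Real.sqrt ((1 - δ*r^2/a^2) / (1 - r^2/a^2)))
      (volume.restrict (Set.uIoc (0:ℝ) a)) := by
    apply Measurable.aestronglyMeasurable; fun_prop
  have hb : IntervalIntegrable (fun r => a * Real.sqrt a * (a - r) ^ (-(1:ℝ)/2))
      volume 0 a := by
    have h1 : IntervalIntegrable (fun x : ℝ => x ^ (-(1:ℝ)/2)) volume (a - 0) (a - a) :=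
      intervalIntegral.intervalIntegrable_rpow' (by norm_num)
    simpa using ((h1.comp_sub_left a).const_mul (a * Real.sqrt a))
  refine hb.mono_fun hmeas ?_
  filter_upwards [ae_restrict_mem measurableSet_uIoc] with r hr
  rw [Set.uIoc_of_le ha.le] at hr
  obtain ⟨hr0, hra⟩ := hr
  have hbpos : (0:ℝ) ≤ a * Real.sqrt a * (a - r) ^ (-(1:ℝ)/2) :=
    mul_nonneg (by positivity) (Real.rpow_nonneg (by linarith) _)
  rw [Real.norm_eq_abs, Real.norm_eq_abs, abs_of_nonneg (mul_nonneg hr0.le (Real.sqrt_nonneg _)),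
    abs_of_nonneg hbpos]
  rcases eq_or_lt_of_le hra with h | hra'
  · subst h
    have : (1:ℝ) - r^2/r^2 = 0 := by field_simp; ring
    rw [this, div_zero, Real.sqrt_zero, mul_zero]
    exact hbpos
  · exact g_bound a δ r ha hδ0 hδ1 hr0 hra'

lemma J_eval_s10 (a δ : ℝ) (ha : 0 < a) (hδ0 : 0 < δ) (hδ1 : δ < 1) :
    ∫ r in (0:ℝ)..a, r * Real.sqrt ((1 - δ*r^2/a^2) / (1 - r^2/a^2))
      = a^2/2 + a^2*(1-δ)/(2*Real.sqrt δ) *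
          Real.log ((1 + Real.sqrt δ)/Real.sqrt (1-δ)) := by
  set s := Real.sqrt δ with hs_def
  have hs : 0 < s := Real.sqrt_pos.2 hδ0
  have hs2 : s^2 = δ := Real.sq_sqrt hδ0.le
  set C := a^2*(1-δ)/(2*s) with hC_def
  set F : ℝ → ℝ := fun r => -(a^2/2) * (Real.sqrt (1 - r^2/a^2) * Real.sqrt (1 - δ*r^2/a^2))
    + -C * Real.log (s * Real.sqrt (1 - r^2/a^2) + Real.sqrt (1 - δ*r^2/a^2)) with hF_def
  have hderiv : ∀ r ∈ Set.Ioo (0:ℝ) a,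
      HasDerivAt F (r * Real.sqrt ((1 - δ*r^2/a^2) / (1 - r^2/a^2))) r := by
    intro r hr
    obtain ⟨hr0, hra⟩ := hr
    have hPpos : (0:ℝ) < 1 - r^2/a^2 := by
      rw [sub_pos, div_lt_one (by positivity)]; nlinarith
    have hQpos : (0:ℝ) < 1 - δ*r^2/a^2 := by
      have h := mul_nonneg (by linarith : (0:ℝ) ≤ 1-δ) (by positivity : (0:ℝ) ≤ r^2/a^2)
      have he : δ*r^2/a^2 = r^2/a^2 - (1-δ)*(r^2/a^2) := by ring
      rw [he]; linarith
    set p := Real.sqrt (1 - r^2/a^2) with hp_def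
    set q := Real.sqrt (1 - δ*r^2/a^2) with hq_def
    have hp : 0 < p := Real.sqrt_pos.2 hPpos
    have hq : 0 < q := Real.sqrt_pos.2 hQpos
    have hp2 : p^2 = 1 - r^2/a^2 := Real.sq_sqrt hPpos.le
    have hq2 : q^2 = 1 - δ*r^2/a^2 := Real.sq_sqrt hQpos.le
    have hden : 0 < s * p + q := by positivity
    have h1 : HasDerivAt (fun r : ℝ => 1 - r^2/a^2) (-(2*r/a^2)) r := by
      simpa using ((hasDerivAt_pow 2 r).div_const (a^2)).const_sub 1
    have h2 : HasDerivAt (fun r : ℝ => 1 - δ*r^2/a^2) (-(2*(δ*r)/a^2)) r := by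
      have h2' := (((hasDerivAt_pow (𝕜 := ℝ) 2 r).const_mul δ).div_const (a^2)).const_sub 1
      refine h2'.congr_deriv ?_
      push_cast
      ring
    have hP : HasDerivAt (fun r : ℝ => Real.sqrt (1 - r^2/a^2)) (-(2*r/a^2) / (2*p)) r :=
      h1.sqrt hPpos.ne'
    have hQ : HasDerivAt (fun r : ℝ => Real.sqrt (1 - δ*r^2/a^2)) (-(2*(δ*r)/a^2) / (2*q)) r :=
      h2.sqrt hQpos.ne'
    have hlog : HasDerivAt (fun r : ℝ => Real.log (s * Real.sqrt (1 - r^2/a^2)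
        + Real.sqrt (1 - δ*r^2/a^2)))
        ((s * (-(2*r/a^2) / (2*p)) + -(2*(δ*r)/a^2) / (2*q)) / (s * p + q)) r :=
      ((hP.const_mul s).add hQ).log hden.ne'
    have hF : HasDerivAt F
        (-(a^2/2) * ((-(2*r/a^2) / (2*p)) * q + p * (-(2*(δ*r)/a^2) / (2*q)))
          + -C * ((s * (-(2*r/a^2) / (2*p)) + -(2*(δ*r)/a^2) / (2*q)) / (s * p + q))) r :=
      ((hP.mul hQ).const_mul (-(a^2/2))).add (hlog.const_mul (-C))
    convert hF using 1
    rw [Real.sqrt_div hQpos.le, ← hp_def, ← hq_def]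
    rw [hC_def, ← hs2]
    have hrel : s^2 * p^2 + 1 - s^2 = q^2 := by
      rw [hp2, hq2, hs2]; field_simp; ring
    have hane : (a:ℝ) ≠ 0 := ha.ne'
    field_simp
    ring_nf
    linear_combination (-(q + p*s)) * hrel
  have hint := g_integrable a δ ha hδ0 hδ1
  have hcont : Continuous (fun r : ℝ => Real.sqrt (1 - r^2/a^2)) := by fun_prop
  have hcont2 : Continuous (fun r : ℝ => Real.sqrt (1 - δ*r^2/a^2)) := by fun_prop
  have hF0 : ContinuousAt F 0 := by
    apply ContinuousAt.add
    · exact (continuousAt_const.mul ((hcont.continuousAt).mul (hcont2.continuousAt)))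
    · apply ContinuousAt.mul continuousAt_const
      have hinner : Continuous (fun x : ℝ => s * Real.sqrt (1 - x^2/a^2)
          + Real.sqrt (1 - δ*x^2/a^2)) := by fun_prop
      apply (Real.continuousAt_log ?_).comp hinner.continuousAt
      have : (0:ℝ) < s * Real.sqrt (1 - 0^2/a^2) + Real.sqrt (1 - δ*0^2/a^2) := by
        norm_num
        positivity
      exact this.ne'
  have haa : a^2/a^2 = (1:ℝ) := div_self (by positivity)
  have e1 : 1 - a^2/a^2 = (0:ℝ) := by rw [haa]; ring
  have e2 : 1 - δ*a^2/a^2 = 1 - δ := by rw [mul_div_assoc, haa, mul_one]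
  have h1δ : (0:ℝ) < 1 - δ := by linarith
  have hFa : ContinuousAt F a := by
    apply ContinuousAt.add
    · exact (continuousAt_const.mul ((hcont.continuousAt).mul (hcont2.continuousAt)))
    · apply ContinuousAt.mul continuousAt_const
      have hinner : Continuous (fun x : ℝ => s * Real.sqrt (1 - x^2/a^2)
          + Real.sqrt (1 - δ*x^2/a^2)) := by fun_prop
      apply (Real.continuousAt_log ?_).comp hinner.continuousAt
      have : (0:ℝ) < s * Real.sqrt (1 - a^2/a^2) + Real.sqrt (1 - δ*a^2/a^2) := by
        rw [e1, e2]
        simp [Real.sqrt_pos.2 h1δ]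
      exact this.ne'
  rw [intervalIntegral.integral_eq_sub_of_hasDerivAt_of_tendsto ha hderiv hint
    (hF0.continuousWithinAt.tendsto) (hFa.continuousWithinAt.tendsto)]
  have hFa_val : F a = -C * Real.log (Real.sqrt (1-δ)) := by
    rw [hF_def]
    simp only
    rw [e1, e2]
    simp
  have hF0_val : F 0 = -(a^2/2) + -C * Real.log (s + 1) := by
    rw [hF_def]
    simp only
    norm_num
  rw [hFa_val, hF0_val]
  rw [Real.log_div (by positivity) (Real.sqrt_pos.2 h1δ).ne', add_comm (1:ℝ) s]
  ring

lemma polar_mem_iff (a : ℝ) (ha : 0 < a)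
    (r θ : ℝ) (hr : 0 < r) (hθ1 : -π < θ) (hθ2 : θ < π) :
    ((0 < r * Real.cos θ ∧ r * Real.cos θ < a) ∧ 0 < r * Real.sin θ ∧
        r * Real.sin θ < a * Real.sqrt (1 - (r * Real.cos θ)^2/a^2))
      ↔ ((0 < r ∧ r < a) ∧ 0 < θ ∧ θ < π/2) := by
  have hRkey : ∀ x : ℝ, a * Real.sqrt (1 - x^2/a^2) = Real.sqrt (a^2 - x^2) := by
    intro x
    have : a^2 - x^2 = a^2 * (1 - x^2/a^2) := by field_simp
    rw [this, Real.sqrt_mul (by positivity), Real.sqrt_sq ha.le]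
  constructor
  · rintro ⟨⟨hx0, hxa⟩, hy0, hyR⟩
    have hsin : 0 < Real.sin θ := (mul_pos_iff.mp hy0).elim (fun h => h.2)
      (fun h => absurd h.1 (not_lt.2 hr.le))
    have hcos : 0 < Real.cos θ := (mul_pos_iff.mp hx0).elim (fun h => h.2)
      (fun h => absurd h.1 (not_lt.2 hr.le))
    have hθ0 : 0 < θ := by
      by_contra hle
      push_neg at hle
      rcases eq_or_lt_of_le hle with h | h
      · rw [h, Real.sin_zero] at hsin; exact lt_irrefl 0 hsin
      · exact absurd hsin (not_lt.2 (le_of_lt (Real.sin_neg_of_neg_of_neg_pi_lt h hθ1)))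
    have hθh : θ < π/2 := by
      by_contra hle
      push_neg at hle
      exact absurd hcos (not_lt.2 (Real.cos_nonpos_of_pi_div_two_le_of_le hle (by linarith)))
    refine ⟨⟨hr, ?_⟩, hθ0, hθh⟩
    rw [hRkey] at hyR
    have hy2 : (r * Real.sin θ)^2 < a^2 - (r * Real.cos θ)^2 :=
      (Real.lt_sqrt hy0.le).1 hyR
    have hr2 : r^2 < a^2 := by nlinarith [Real.sin_sq_add_cos_sq θ]
    exact lt_of_pow_lt_pow_left₀ 2 ha.le hr2
  · rintro ⟨⟨_, hra⟩, hθ0, hθh⟩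
    have hcos : 0 < Real.cos θ := Real.cos_pos_of_mem_Ioo ⟨by linarith, hθh⟩
    have hsin : 0 < Real.sin θ := Real.sin_pos_of_pos_of_lt_pi hθ0 (by linarith)
    have hx0 : 0 < r * Real.cos θ := mul_pos hr hcos
    have hxa : r * Real.cos θ < a :=
      lt_of_le_of_lt (by nlinarith [Real.cos_le_one θ]) hra
    refine ⟨⟨hx0, hxa⟩, mul_pos hr hsin, ?_⟩
    rw [hRkey]
    rw [show (r * Real.sin θ) = √((r * Real.sin θ)^2) from
      (Real.sqrt_sq (mul_pos hr hsin).le).symm]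
    apply Real.sqrt_lt_sqrt (by positivity)
    have hr2 : r^2 < a^2 := by nlinarith
    have key : (r*Real.sin θ)^2 + (r*Real.cos θ)^2 = r^2 := by
      linear_combination r^2 * (Real.sin_sq_add_cos_sq θ)
    linarith

lemma octant_eq (a δ : ℝ) (ha : 0 < a)
    (hgInt : IntervalIntegrable
      (fun r => r * Real.sqrt ((1 - δ*r^2/a^2) / (1 - r^2/a^2))) volume 0 a) :
    (∫ x in (0:ℝ)..a, ∫ y in (0:ℝ)..(a * Real.sqrt (1 - x^2/a^2)),
        Real.sqrt ((1 - δ * x^2/a^2 - δ * y^2/a^2) / (1 - x^2/a^2 - y^2/a^2)))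
      = (π/2) * ∫ r in (0:ℝ)..a, r * Real.sqrt ((1 - δ*r^2/a^2) / (1 - r^2/a^2)) := by
  set g : ℝ → ℝ := fun r => r * Real.sqrt ((1 - δ*r^2/a^2) / (1 - r^2/a^2)) with hg_def
  set h : ℝ × ℝ → ℝ := fun p =>
    Real.sqrt ((1 - δ * p.1^2/a^2 - δ * p.2^2/a^2) / (1 - p.1^2/a^2 - p.2^2/a^2)) with hh_def
  set D : Set (ℝ × ℝ) := {p | (0 < p.1 ∧ p.1 < a) ∧ 0 < p.2 ∧
    p.2 < a * Real.sqrt (1 - p.1^2/a^2)} with hD_def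
  have hDmeas : MeasurableSet D := by
    apply MeasurableSet.inter
    · exact (measurableSet_lt measurable_const measurable_fst).inter
        (measurableSet_lt measurable_fst measurable_const)
    · exact (measurableSet_lt measurable_const measurable_snd).inter
        (measurableSet_lt measurable_snd (by fun_prop))
  set R : Set (ℝ × ℝ) := Set.Ioo (0:ℝ) a ×ˢ Set.Ioo (0:ℝ) (π/2) with hR_def
  have hRmeas : MeasurableSet R := measurableSet_Ioo.prod measurableSet_Ioo
  -- pointwise polar identity on the target
  have key : ∀ p ∈ polarCoord.target,
      p.1 • D.indicator h (polarCoord.symm p) = R.indicator (fun q => g q.1) p := by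
    rintro ⟨r, θ⟩ hp
    obtain ⟨hr, hθ⟩ := hp
    simp only [Set.mem_Ioi] at hr
    obtain ⟨hθ1, hθ2⟩ := hθ
    have hsymm : polarCoord.symm (r, θ) = (r * Real.cos θ, r * Real.sin θ) := rfl
    have hiff := polar_mem_iff a ha r θ hr hθ1 hθ2
    by_cases hmem : (r, θ) ∈ R
    · have hD' : polarCoord.symm (r, θ) ∈ D := by
        rw [hsymm, hD_def]
        exact hiff.2 ⟨⟨hr, hmem.1.2⟩, hmem.2⟩
      rw [Set.indicator_of_mem hmem, Set.indicator_of_mem hD', hsymm]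
      have hxy : (r * Real.cos θ)^2 + (r * Real.sin θ)^2 = r^2 := by
        linear_combination r^2 * (Real.cos_sq_add_sin_sq θ)
      have hc2 : (r * Real.cos θ)^2 = r^2 - (r * Real.sin θ)^2 := by linarith [hxy]
      have e1 : 1 - δ * (r * Real.cos θ)^2/a^2 - δ * (r * Real.sin θ)^2/a^2
          = 1 - δ * r^2/a^2 := by
        rw [hc2]; ring
      have e2 : 1 - (r * Real.cos θ)^2/a^2 - (r * Real.sin θ)^2/a^2
          = 1 - r^2/a^2 := by
        rw [hc2]; ring
      rw [hh_def]
      simp only [smul_eq_mul]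
      rw [e1, e2]
    · have hD' : polarCoord.symm (r, θ) ∉ D := by
        rw [hsymm, hD_def]
        intro hcon
        apply hmem
        have := hiff.1 hcon
        exact ⟨⟨hr, this.1.2⟩, this.2⟩
      rw [Set.indicator_of_notMem hmem, Set.indicator_of_notMem hD', smul_zero]
  -- integrability of the rectangle function on the target
  have hg_int : IntegrableOn g (Set.Ioo 0 a) volume :=
    (intervalIntegrable_iff_integrableOn_Ioo_of_le ha.le).1 hgInt
  have h1_int : IntegrableOn (fun _ : ℝ => (1:ℝ)) (Set.Ioo 0 (π/2)) volume :=
    integrableOn_const (by rw [Real.volume_Ioo]; exact ENNReal.ofReal_ne_top)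
  have hrect_int : IntegrableOn (fun q : ℝ × ℝ => g q.1) R volume := by
    rw [hR_def, IntegrableOn, Measure.volume_eq_prod, ← Measure.prod_restrict]
    have := hg_int.mul_prod h1_int
    simpa using this
  have htarget_int : IntegrableOn (R.indicator (fun q : ℝ × ℝ => g q.1))
      polarCoord.target volume :=
    (hrect_int.integrable_indicator hRmeas).integrableOn
  -- integrability of D.indicator h via change of variables
  have hIntD : Integrable (D.indicator h) volume := by
    set B : ℝ × ℝ → ℝ × ℝ →L[ℝ] ℝ × ℝ := fun p =>
      LinearMap.toContinuousLinearMap (Matrix.toLin (Module.Basis.finTwoProd ℝ) (Module.Basis.finTwoProd ℝ)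
        !![Real.cos p.2, -p.1 * Real.sin p.2; Real.sin p.2, p.1 * Real.cos p.2]) with hB_def
    have hBder : ∀ p ∈ polarCoord.target,
        HasFDerivWithinAt polarCoord.symm (B p) polarCoord.target p := fun p _ =>
      (hasFDerivAt_polarCoord_symm p).hasFDerivWithinAt
    have hB_det : ∀ p, (B p).det = p.1 := by
      intro p
      conv_rhs => rw [← one_mul p.1, ← Real.cos_sq_add_sin_sq p.2]
      simp only [hB_def, neg_mul, LinearMap.det_toContinuousLinearMap, LinearMap.det_toLin,
        Matrix.det_fin_two_of, sub_neg_eq_add]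
      ring
    have hinj : Set.InjOn polarCoord.symm polarCoord.target := polarCoord.symm.injOn
    have hiff := integrableOn_image_iff_integrableOn_abs_det_fderiv_smul volume
      polarCoord.open_target.measurableSet hBder hinj (D.indicator h)
    rw [polarCoord.symm_image_target_eq_source] at hiff
    have hright : IntegrableOn
        (fun p : ℝ × ℝ => |(B p).det| • D.indicator h (polarCoord.symm p))
        polarCoord.target volume := by
      apply htarget_int.congr_fun ?_ polarCoord.open_target.measurableSet
      intro p hp
      dsimp only
      rw [← key p hp, hB_det p, abs_of_pos hp.1]
    have hsrc : IntegrableOn (D.indicator h) polarCoord.source volume := hiff.2 hright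
    rw [← integrableOn_univ]
    exact hsrc.congr_set_ae polarCoord_source_ae_eq_univ.symm
  -- main calculation
  have hR0 : ∀ x : ℝ, 0 ≤ a * Real.sqrt (1 - x^2/a^2) := fun x => by positivity
  calc (∫ x in (0:ℝ)..a, ∫ y in (0:ℝ)..(a * Real.sqrt (1 - x^2/a^2)),
          Real.sqrt ((1 - δ * x^2/a^2 - δ * y^2/a^2) / (1 - x^2/a^2 - y^2/a^2)))
      = ∫ x in Set.Ioo (0:ℝ) a, (∫ y in (0:ℝ)..(a * Real.sqrt (1 - x^2/a^2)),
          h (x, y)) := by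
        rw [intervalIntegral.integral_of_le ha.le, integral_Ioc_eq_integral_Ioo]
    _ = ∫ x in Set.Ioo (0:ℝ) a, (∫ y : ℝ, D.indicator h (x, y)) := by
        apply setIntegral_congr_fun measurableSet_Ioo
        intro x hx
        dsimp only
        rw [intervalIntegral.integral_of_le (hR0 x), integral_Ioc_eq_integral_Ioo,
          ← integral_indicator measurableSet_Ioo]
        congr 1
        funext y
        by_cases hy : y ∈ Set.Ioo (0:ℝ) (a * Real.sqrt (1 - x^2/a^2))
        · rw [Set.indicator_of_mem hy, Set.indicator_of_mem]
          exact ⟨⟨hx.1, hx.2⟩, hy.1, hy.2⟩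
        · rw [Set.indicator_of_notMem hy, Set.indicator_of_notMem]
          intro hcon
          exact hy ⟨hcon.2.1, hcon.2.2⟩
    _ = ∫ x : ℝ, (∫ y : ℝ, D.indicator h (x, y)) := by
        apply setIntegral_eq_integral_of_forall_compl_eq_zero
        intro x hx
        have : ∀ y : ℝ, D.indicator h (x, y) = 0 := by
          intro y
          apply Set.indicator_of_notMem
          intro hcon
          exact hx ⟨hcon.1.1, hcon.1.2⟩
        simp [this]
    _ = ∫ p : ℝ × ℝ, D.indicator h p := by
        rw [← MeasureTheory.integral_prod (fun p => D.indicator h p)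
          (by rwa [← Measure.volume_eq_prod])]
        rw [Measure.volume_eq_prod]
    _ = ∫ p in polarCoord.target, p.1 • D.indicator h (polarCoord.symm p) :=
        (integral_comp_polarCoord_symm (D.indicator h)).symm
    _ = ∫ p in polarCoord.target, R.indicator (fun q => g q.1) p :=
        setIntegral_congr_fun polarCoord.open_target.measurableSet key
    _ = ∫ p in polarCoord.target ∩ R, g p.1 := setIntegral_indicator hRmeas
    _ = ∫ p in R, g p.1 := by
        congr 1
        rw [Set.inter_eq_self_of_subset_right]
        rw [hR_def]
        apply Set.prod_mono
        · exact Set.Ioo_subset_Ioi_self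
        · intro θ hθ
          exact ⟨by linarith [hθ.1, Real.pi_pos], by linarith [hθ.2, Real.pi_pos]⟩
    _ = (∫ r in Set.Ioo (0:ℝ) a, g r) * (∫ θ in Set.Ioo (0:ℝ) (π/2), (1:ℝ)) := by
        rw [hR_def, Measure.volume_eq_prod, ← Measure.prod_restrict,
          ← MeasureTheory.integral_prod_mul (f := g) (g := fun _ => (1:ℝ))]
        simp
    _ = (π/2) * ∫ r in (0:ℝ)..a, g r := by
        rw [intervalIntegral.integral_of_le ha.le, integral_Ioc_eq_integral_Ioo,
          setIntegral_const, Real.volume_real_Ioo_of_le (by positivity), sub_zero, smul_eq_mul,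
          mul_one]
        ring

/-- Surface area of the oblate spheroid `x²/a² + y²/a² + z²/c² = 1` (`a = b > c > 0`),
expressed as 8 times the octant double integral, equals
`2πa² + πc²·(1/√(1-c²/a²))·log((1+√(1-c²/a²))/(1-√(1-c²/a²)))`. -/
theorem oblate_spheroid_area (a c : ℝ) (hc : 0 < c) (hca : c < a) :
    8 * ∫ x in (0:ℝ)..a, ∫ y in (0:ℝ)..(a * Real.sqrt (1 - x^2/a^2)),
        Real.sqrt ((1 - (1 - c^2/a^2) * x^2/a^2 - (1 - c^2/a^2) * y^2/a^2) /
          (1 - x^2/a^2 - y^2/a^2))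
      = 2 * Real.pi * a^2
        + Real.pi * c^2 * (1 / Real.sqrt (1 - c^2/a^2)) *
            Real.log ((1 + Real.sqrt (1 - c^2/a^2)) / (1 - Real.sqrt (1 - c^2/a^2))) := by
  have ha : 0 < a := hc.trans hca
  have hδ0 : 0 < 1 - c^2/a^2 := by
    rw [sub_pos, div_lt_one (by positivity)]
    nlinarith
  have hδ1 : 1 - c^2/a^2 < 1 := by
    have : 0 < c^2/a^2 := by positivity
    linarith
  rw [octant_eq a (1 - c^2/a^2) ha (g_integrable a (1 - c^2/a^2) ha hδ0 hδ1),
    J_eval_s10 a (1 - c^2/a^2) ha hδ0 hδ1]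
  have hs1mδ : Real.sqrt (1 - (1 - c^2/a^2)) = c/a := by
    rw [show 1 - (1 - c^2/a^2) = (c/a)^2 by rw [div_pow]; ring]
    exact Real.sqrt_sq (by positivity)
  rw [hs1mδ]
  set s := Real.sqrt (1 - c^2/a^2) with hs_def
  have hs0 : 0 < s := Real.sqrt_pos.2 hδ0
  have hs1 : s < 1 := by
    have h := Real.sqrt_lt_sqrt (by linarith : (0:ℝ) ≤ 1 - c^2/a^2) hδ1
    rwa [Real.sqrt_one] at h
  have hs2 : s^2 = 1 - c^2/a^2 := Real.sq_sqrt hδ0.le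
  have h1ms : (0:ℝ) < 1 - s := by linarith
  have h1ms2 : (0:ℝ) < 1 - s^2 := by nlinarith
  have hda : (c/a)^2 = 1 - s^2 := by
    rw [div_pow, hs2]; ring
  have hL : Real.log ((1 + s) / (1 - s)) = 2 * Real.log ((1 + s) / (c/a)) := by
    rw [show ((1:ℝ) + s) / (1 - s) = ((1 + s)/(c/a))^2 by
      rw [div_pow, hda, div_eq_div_iff h1ms.ne' h1ms2.ne']
      ring]
    rw [Real.log_pow]
    push_cast
    ring
  rw [hL]
  field_simp
  ring
end

section
/- For a > c > 0, (1/2)·∫₀^∞ dr / ( (a²+r)·√(c²+r) ) = arcsin(√(1−c²/a²)) / (a·√(1−c²/a²)). Equivalently, the capacitance of the oblate spheroid with a = b > c is C = a·√(1−c²/a²)/arcsin(√(1−c²/a²)). -/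
open MeasureTheory Real

/-- Capacitance of the oblate spheroid (`a = b > c > 0`):
`(1/2)·∫₀^∞ dr/((a²+r)√(c²+r)) = arcsin(√(1-c²/a²))/(a√(1-c²/a²))`, i.e.
`C = a√(1-c²/a²)/arcsin(√(1-c²/a²))`. -/
theorem oblate_spheroid_capacitance (a c : ℝ) (hc : 0 < c) (hca : c < a) :
    (1/2) * ∫ r in Set.Ioi (0:ℝ), ((a^2+r) * Real.sqrt (c^2+r))⁻¹
      = Real.arcsin (Real.sqrt (1 - c^2/a^2)) / (a * Real.sqrt (1 - c^2/a^2)) ∧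
    ((1/2) * ∫ r in Set.Ioi (0:ℝ),
        (Real.sqrt ((a^2+r)*(a^2+r)*(c^2+r)))⁻¹)⁻¹
      = a * Real.sqrt (1 - c^2/a^2) / Real.arcsin (Real.sqrt (1 - c^2/a^2)) := by
  have ha : 0 < a := hc.trans hca
  have hk2 : (0:ℝ) < a^2 - c^2 := by nlinarith
  set k : ℝ := Real.sqrt (a^2 - c^2) with hkdef
  have hk : 0 < k := Real.sqrt_pos.mpr hk2
  have hksq : k^2 = a^2 - c^2 := Real.sq_sqrt hk2.le
  set g : ℝ → ℝ := fun r => (2/k) * Real.arctan (Real.sqrt (c^2+r) / k) with hgdef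
  have hcr : ∀ r : ℝ, 0 ≤ r → 0 < c^2 + r := fun r hr => by nlinarith [pow_pos hc 2]
  have hderiv : ∀ r ∈ Set.Ici (0:ℝ), HasDerivAt g (((a^2+r) * Real.sqrt (c^2+r))⁻¹) r := by
    intro r hr
    have h1 : 0 < c^2 + r := hcr r hr
    have hs : 0 < Real.sqrt (c^2+r) := Real.sqrt_pos.mpr h1
    have hsq : (Real.sqrt (c^2+r))^2 = c^2 + r := Real.sq_sqrt h1.le
    have d1 : HasDerivAt (fun x : ℝ => Real.sqrt (c^2+x)) (1 / (2 * Real.sqrt (c^2+r))) r := by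
      have := (Real.hasDerivAt_sqrt (x := c^2+r) h1.ne').comp r
        ((hasDerivAt_id r).const_add (c^2))
      simpa [Function.comp_def] using this
    have d2 : HasDerivAt (fun x : ℝ => Real.sqrt (c^2+x) / k)
        (1 / (2 * Real.sqrt (c^2+r)) / k) r := d1.div_const k
    have d3 := ((Real.hasDerivAt_arctan _).comp r d2).const_mul (2/k)
    have har : (0:ℝ) < a^2 + r := by nlinarith [pow_pos ha 2]
    have h2 : 1 + (Real.sqrt (c^2+r)/k)^2 = (a^2 + r) / k^2 := by
      rw [div_pow, hsq, hksq]; field_simp; ring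
    have heq : ((a^2+r) * Real.sqrt (c^2+r))⁻¹
        = 2/k * (1 / (1 + (Real.sqrt (c^2+r)/k)^2) * (1 / (2 * Real.sqrt (c^2+r)) / k)) := by
      rw [h2]; field_simp
    rw [heq]
    exact d3
  have hpos : ∀ r ∈ Set.Ioi (0:ℝ), 0 ≤ ((a^2+r) * Real.sqrt (c^2+r))⁻¹ := by
    intro r hr
    have h1 : 0 < c^2 + r := by nlinarith [pow_pos hc 2, hr.out]
    have : (0:ℝ) < (a^2+r) * Real.sqrt (c^2+r) := by
      have := Real.sqrt_pos.mpr h1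
      have : (0:ℝ) < a^2 + r := by nlinarith [pow_pos ha 2, hr.out]
      positivity
    positivity
  have htend : Filter.Tendsto g Filter.atTop (nhds ((2/k) * (π/2))) := by
    apply Filter.Tendsto.const_mul
    have h1 : Filter.Tendsto (fun r : ℝ => Real.sqrt (c^2+r) / k) Filter.atTop Filter.atTop := by
      apply Filter.Tendsto.atTop_div_const hk
      apply Filter.tendsto_atTop_atTop.2
      intro b
      refine ⟨b^2, fun x hx => ?_⟩
      calc b ≤ Real.sqrt (b^2) := by
              rw [Real.sqrt_sq_eq_abs]; exact le_abs_self b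
        _ ≤ Real.sqrt (c^2 + x) := Real.sqrt_le_sqrt (by nlinarith [sq_nonneg c])
    exact (Real.tendsto_arctan_atTop.mono_right nhdsWithin_le_nhds).comp h1
  have hint : ∫ r in Set.Ioi (0:ℝ), ((a^2+r) * Real.sqrt (c^2+r))⁻¹
      = (2/k) * (π/2) - g 0 :=
    integral_Ioi_of_hasDerivAt_of_nonneg' hderiv hpos htend
  have hg0 : g 0 = (2/k) * Real.arctan (c/k) := by
    simp [hgdef, Real.sqrt_sq hc.le]
  have hval : (1/2) * ∫ r in Set.Ioi (0:ℝ), ((a^2+r) * Real.sqrt (c^2+r))⁻¹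
      = Real.arctan (k/c) / k := by
    rw [hint, hg0]
    have h3 := Real.arctan_inv_of_pos (div_pos hc hk)
    rw [show (c/k)⁻¹ = k/c by rw [inv_div]] at h3
    rw [h3]
    field_simp
  have hska : Real.sqrt (1 - c^2/a^2) = k/a := by
    rw [show 1 - c^2/a^2 = (a^2-c^2)/a^2 by field_simp,
      Real.sqrt_div hk2.le, Real.sqrt_sq ha.le]
  have hrhs : Real.arcsin (Real.sqrt (1 - c^2/a^2)) = Real.arctan (k/c) := by
    rw [hska]
    have hmem : k/a ∈ Set.Ioo (-(1:ℝ)) 1 := by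
      constructor
      · have : (0:ℝ) < k/a := div_pos hk ha
        linarith
      · rw [div_lt_one ha]
        nlinarith [Real.sq_sqrt hk2.le, Real.sqrt_nonneg (a^2 - c^2)]
    rw [Real.arcsin_eq_arctan hmem]
    congr 1
    have h4 : 1 - (k/a)^2 = (c/a)^2 := by
      rw [div_pow, hksq, div_pow]; field_simp; ring
    rw [h4, Real.sqrt_sq (by positivity : (0:ℝ) ≤ c/a)]
    field_simp
  constructor
  · rw [hval, hrhs, hska]
    congr 1
    field_simp
  · have hcongr : ∫ r in Set.Ioi (0:ℝ), (Real.sqrt ((a^2+r)*(a^2+r)*(c^2+r)))⁻¹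
        = ∫ r in Set.Ioi (0:ℝ), ((a^2+r) * Real.sqrt (c^2+r))⁻¹ := by
      apply setIntegral_congr_fun measurableSet_Ioi
      intro r hr
      have hr0 : (0:ℝ) ≤ r := (le_of_lt hr)
      have har : (0:ℝ) ≤ a^2 + r := by positivity
      have hsr : Real.sqrt ((a^2+r)*(a^2+r)*(c^2+r)) = (a^2+r) * Real.sqrt (c^2+r) := by
        rw [show (a^2+r)*(a^2+r)*(c^2+r) = (a^2+r)^2 * (c^2+r) by ring,
          Real.sqrt_mul (by positivity), Real.sqrt_sq har]
      simp only [hsr]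
    rw [hcongr, hval, hrhs, hska]
    have harc : 0 < Real.arctan (k/c) := by
      have := Real.arctan_strictMono (div_pos hk hc)
      simpa using this
    rw [inv_div]
    congr 1
    field_simp
end

section
/- For a ≥ b ≥ c > 0, the demagnetizing integral satisfies abc·∫₀^∞ du / ( (a²+u)·√((a²+u)(b²+u)(c²+u)) ) = (bc/a²)·(Γ(3/2)Γ(1)/Γ(5/2))·F₁(3/2; 1/2, 1/2; 5/2; 1−b²/a², 1−c²/a²) = (2bc/(3a²))·F₁(3/2; 1/2, 1/2; 5/2; 1−b²/a², 1−c²/a²). -/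
open MeasureTheory Real

/-- Appell's first hypergeometric function `F₁(α;β,β';γ;x,y)`. -/
noncomputable def appellF1 (α β β' γ x y : ℝ) : ℝ :=
  ∑' p : ℕ × ℕ, poch α (p.1 + p.2) * poch β p.1 * poch β' p.2 /
    (poch γ (p.1 + p.2) * p.1.factorial * p.2.factorial) * x ^ p.1 * y ^ p.2

namespace Demag

noncomputable def aa (n : ℕ) : ℝ := poch (1/2) n / n.factorial

lemma poch_zero (a : ℝ) : poch a 0 = 1 := by simp [poch]

lemma poch_succ (a : ℝ) (n : ℕ) : poch a (n+1) = poch a n * (a + n) := by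
  simp [poch, Finset.prod_range_succ]

lemma poch_pos {a : ℝ} (ha : 0 < a) (n : ℕ) : 0 < poch a n :=
  Finset.prod_pos fun i _ => by positivity

lemma poch_ratio (k : ℕ) : (3/2 : ℝ) * poch (5/2) k = poch (3/2) k * (3/2 + k) := by
  induction k with
  | zero => simp [poch]
  | succ n ih =>
      rw [poch_succ, poch_succ]
      push_cast
      linear_combination ((5/2 : ℝ) + n) * ih


lemma aa_zero : aa 0 = 1 := by simp [aa, poch_zero]

lemma aa_pos (n : ℕ) : 0 < aa n :=
  div_pos (poch_pos (by norm_num) n) (by positivity)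

lemma aa_succ (n : ℕ) : ((n:ℝ)+1) * aa (n+1) = (1/2 + n) * aa n := by
  have h1 : (n.factorial : ℝ) ≠ 0 := by positivity
  have h2 : ((n:ℝ) + 1) ≠ 0 := by positivity
  simp only [aa, poch_succ, Nat.factorial_succ, Nat.cast_mul, Nat.cast_add, Nat.cast_one]
  field_simp

lemma aa_le_one (n : ℕ) : aa n ≤ 1 := by
  induction n with
  | zero => simp [aa_zero]
  | succ n ih =>
      have h := aa_succ n
      have h2 : (0:ℝ) < (n:ℝ) + 1 := by positivity
      have : aa (n+1) = (1/2 + n) / ((n:ℝ)+1) * aa n := by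
        field_simp at h ⊢; linarith [h]
      rw [this]
      have hle : (1/2 + (n:ℝ)) / ((n:ℝ)+1) ≤ 1 := by
        rw [div_le_one h2]; linarith
      calc (1/2 + (n:ℝ)) / ((n:ℝ)+1) * aa n ≤ 1 * 1 := by
            apply mul_le_mul hle ih (aa_pos n).le (by norm_num)
        _ = 1 := one_mul 1

lemma summable_aa {z : ℝ} (hz : |z| < 1) : Summable (fun n => aa n * z ^ n) := by
  apply Summable.of_norm_bounded (summable_geometric_of_lt_one (abs_nonneg z) hz)
  intro n
  rw [norm_mul, norm_pow, Real.norm_eq_abs, Real.norm_eq_abs,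
    abs_of_pos (aa_pos n)]
  calc aa n * |z| ^ n ≤ 1 * |z| ^ n := by
        apply mul_le_mul_of_nonneg_right (aa_le_one n) (by positivity)
    _ = |z| ^ n := one_mul _

lemma summable_n_geom {r : ℝ} (h0 : 0 ≤ r) (h1 : r < 1) :
    Summable (fun n : ℕ => (n:ℝ) * r ^ (n - 1)) := by
  rw [← summable_nat_add_iff 1]
  have : (fun n : ℕ => ((n+1 : ℕ):ℝ) * r ^ ((n+1) - 1)) =
      (fun n : ℕ => (n:ℝ) * r ^ n + r ^ n) := by
    funext n; push_cast; simp [add_mul]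
  rw [this]
  exact ((summable_pow_mul_geometric_of_norm_lt_one 1 (by
    rwa [Real.norm_eq_abs, abs_of_nonneg h0])).congr (by simp)).add
    (summable_geometric_of_lt_one h0 h1)

lemma summable_deriv_term {w r : ℝ} (hwr : |w| ≤ r) (hr : r < 1) :
    Summable (fun n : ℕ => aa n * ((n:ℝ) * w ^ (n-1))) := by
  have hr0 : 0 ≤ r := le_trans (abs_nonneg w) hwr
  apply Summable.of_norm_bounded (summable_n_geom hr0 hr)
  intro n
  rw [norm_mul, norm_mul, norm_pow, Real.norm_eq_abs, Real.norm_eq_abs, Real.norm_eq_abs,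
    abs_of_pos (aa_pos n), abs_of_nonneg (Nat.cast_nonneg n)]
  calc aa n * ((n:ℝ) * |w| ^ (n-1)) ≤ 1 * ((n:ℝ) * r ^ (n-1)) := by
        apply mul_le_mul (aa_le_one n) _ (by positivity) (by norm_num)
        exact mul_le_mul_of_nonneg_left (pow_le_pow_left₀ (abs_nonneg w) hwr _)
          (Nat.cast_nonneg n)
    _ = (n:ℝ) * r ^ (n-1) := one_mul _

lemma summable_naa {w : ℝ} (hw : |w| < 1) :
    Summable (fun n : ℕ => (n:ℝ) * (aa n * w ^ n)) := by
  apply Summable.of_norm_bounded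
    ((summable_pow_mul_geometric_of_norm_lt_one 1 (by rwa [Real.norm_eq_abs, abs_abs])).congr
      (fun n => by simp : ∀ n : ℕ, (n:ℝ) ^ 1 * |w| ^ n = (n:ℝ) * |w| ^ n))
  intro n
  rw [norm_mul, norm_mul, norm_pow, Real.norm_eq_abs, Real.norm_eq_abs, Real.norm_eq_abs,
    abs_of_pos (aa_pos n), abs_of_nonneg (Nat.cast_nonneg n)]
  have := aa_le_one n
  have h2 : aa n * |w| ^ n ≤ |w| ^ n := by
    calc aa n * |w| ^ n ≤ 1 * |w| ^ n := mul_le_mul_of_nonneg_right this (by positivity)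
      _ = _ := one_mul _
  exact mul_le_mul_of_nonneg_left h2 (Nat.cast_nonneg n)

lemma g_hasDeriv {w : ℝ} (hw : |w| < 1) :
    HasDerivAt (fun z => ∑' n, aa n * z ^ n)
      (∑' n, aa n * ((n:ℝ) * w ^ (n-1))) w := by
  set r : ℝ := (1 + |w|)/2 with hr
  have hwr : |w| < r := by rw [hr]; linarith [abs_nonneg w]
  have hr1 : r < 1 := by rw [hr]; linarith
  have hr0 : 0 < r := lt_of_le_of_lt (abs_nonneg w) hwr
  have hg : ∀ (n : ℕ) (y : ℝ), y ∈ Set.Ioo (-r) r →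
      HasDerivAt (fun z => aa n * z ^ n) (aa n * ((n:ℝ) * y ^ (n-1))) y :=
    fun n y _ => HasDerivAt.const_mul (aa n) (hasDerivAt_pow n y)
  have hg' : ∀ (n : ℕ) (y : ℝ), y ∈ Set.Ioo (-r) r →
      ‖aa n * ((n:ℝ) * y ^ (n-1))‖ ≤ (n:ℝ) * r ^ (n-1) := by
    intro n y hy
    have hyr : |y| ≤ r := by
      rw [abs_le]; exact ⟨hy.1.le, hy.2.le⟩
    rw [norm_mul, norm_mul, norm_pow, Real.norm_eq_abs, Real.norm_eq_abs, Real.norm_eq_abs,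
      abs_of_pos (aa_pos n), abs_of_nonneg (Nat.cast_nonneg n)]
    calc aa n * ((n:ℝ) * |y| ^ (n-1)) ≤ 1 * ((n:ℝ) * r ^ (n-1)) := by
          apply mul_le_mul (aa_le_one n) _ (by positivity) (by norm_num)
          exact mul_le_mul_of_nonneg_left (pow_le_pow_left₀ (abs_nonneg y) hyr _)
            (Nat.cast_nonneg n)
      _ = (n:ℝ) * r ^ (n-1) := one_mul _
  exact hasDerivAt_tsum_of_isPreconnected
    (summable_n_geom hr0.le hr1) isOpen_Ioo (convex_Ioo _ _).isPreconnected
    hg hg' (⟨by linarith, hr0⟩ : (0:ℝ) ∈ Set.Ioo (-r) r)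
    (summable_aa (by simp : |(0:ℝ)| < 1))
    (by rw [Set.mem_Ioo, ← abs_lt]; exact hwr)

lemma deriv_identity {w : ℝ} (hw : |w| < 1) :
    (1 - w) * (∑' n, aa n * ((n:ℝ) * w ^ (n-1))) = (∑' n, aa n * w ^ n) / 2 := by
  set S := ∑' n, aa n * ((n:ℝ) * w ^ (n-1)) with hS
  have hsum : Summable (fun n : ℕ => aa n * ((n:ℝ) * w ^ (n-1))) :=
    summable_deriv_term le_rfl hw
  -- S = ∑' n, (1/2 + n) * aa n * w ^ n
  have h1 : S = ∑' n : ℕ, ((1/2 + (n:ℝ)) * aa n) * w ^ n := by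
    rw [hS, Summable.tsum_eq_zero_add hsum]
    simp only [Nat.cast_zero, mul_zero, zero_mul, zero_add]
    apply tsum_congr
    intro n
    have h := aa_succ n
    simp only [Nat.add_sub_cancel, Nat.cast_add, Nat.cast_one]
    linear_combination w ^ n * h
  have hsum2 : Summable (fun n : ℕ => (n:ℝ) * (aa n * w ^ n)) := summable_naa hw
  have hsum3 : Summable (fun n : ℕ => (1/2 : ℝ) * (aa n * w ^ n)) :=
    (summable_aa hw).mul_left _
  have h2 : S = (1/2) * (∑' n, aa n * w ^ n) + ∑' n : ℕ, (n:ℝ) * (aa n * w ^ n) := by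
    rw [h1, ← tsum_mul_left]
    rw [← Summable.tsum_add hsum3 hsum2]
    apply tsum_congr; intro n; ring
  have h3 : (∑' n : ℕ, (n:ℝ) * (aa n * w ^ n)) = w * S := by
    rw [hS, ← tsum_mul_left]
    apply tsum_congr; intro n
    cases n with
    | zero => simp
    | succ m => push_cast; ring_nf
  rw [h3] at h2
  linarith [h2]

lemma binom_eq {z : ℝ} (h0 : 0 ≤ z) (h1 : z < 1) :
    (∑' n, aa n * z ^ n) * Real.sqrt (1 - z) = 1 := by
  set h : ℝ → ℝ := fun w => (∑' n, aa n * w ^ n) * Real.sqrt (1 - w) with hh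
  have key : ∀ w ∈ Set.Icc (0:ℝ) z, h w = h 0 := by
    apply constant_of_has_deriv_right_zero
    · -- continuity
      intro w hw
      have hw1 : |w| < 1 := by
        rw [abs_lt]; constructor <;> [linarith [hw.1]; linarith [hw.2]]
      exact (((g_hasDeriv hw1).continuousAt).mul
        (((continuous_const.sub continuous_id).sqrt).continuousAt)).continuousWithinAt
    · intro w hw
      have hw0 : 0 ≤ w := hw.1
      have hwz : w < z := hw.2
      have hw1 : |w| < 1 := by rw [abs_lt]; constructor <;> linarith
      have hpos : 0 < 1 - w := by linarith
      have hsq : Real.sqrt (1 - w) > 0 := Real.sqrt_pos.mpr hpos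
      have hd1 := g_hasDeriv hw1
      have hd2 : HasDerivAt (fun w => Real.sqrt (1 - w)) (-1 / (2 * Real.sqrt (1 - w))) w := by
        have : HasDerivAt (fun w : ℝ => 1 - w) (-1) w := by
          simpa using (hasDerivAt_id w).const_sub 1
        exact this.sqrt (ne_of_gt hpos)
      have hD := hd1.mul hd2
      have hzero :
          (∑' n, aa n * ((n:ℝ) * w ^ (n-1))) * Real.sqrt (1 - w) +
          (∑' n, aa n * w ^ n) * (-1 / (2 * Real.sqrt (1 - w))) = 0 := by
        have hid := deriv_identity hw1
        have hss : Real.sqrt (1 - w) * Real.sqrt (1 - w) = 1 - w :=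
          Real.mul_self_sqrt hpos.le
        have e1 : (∑' n, aa n * ((n:ℝ) * w ^ (n-1))) * Real.sqrt (1 - w)
            = ((∑' n, aa n * w ^ n) / 2) / Real.sqrt (1 - w) := by
          rw [eq_div_iff (ne_of_gt hsq), mul_assoc, hss, ← hid]; ring
        rw [e1]
        field_simp
        ring
      rw [hzero] at hD
      exact hD.hasDerivWithinAt
  have hz := key z ⟨h0, le_rfl⟩
  simp only [hh] at hz
  rw [hz]
  simp only [sub_zero, Real.sqrt_one, mul_one]
  rw [tsum_eq_single 0]
  · simp [aa_zero]
  · intro n hn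
    rcases Nat.exists_eq_succ_of_ne_zero hn with ⟨m, rfl⟩
    simp

lemma binom_inv {z : ℝ} (h0 : 0 ≤ z) (h1 : z < 1) :
    (∑' n, aa n * z ^ n) = (Real.sqrt (1 - z))⁻¹ := by
  have hne : Real.sqrt (1 - z) ≠ 0 :=
    ne_of_gt (Real.sqrt_pos.mpr (by linarith))
  field_simp
  exact binom_eq h0 h1

set_option maxHeartbeats 1000000 in
lemma prod_summable {x y : ℝ} (hx0 : 0 ≤ x) (hx1 : x < 1) (hy0 : 0 ≤ y) (hy1 : y < 1) :
    Summable (fun p : ℕ × ℕ => aa p.1 * x ^ p.1 * (aa p.2 * y ^ p.2)) := by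
  have h1 : Summable (fun n => aa n * x ^ n) := summable_aa (by rwa [abs_of_nonneg hx0])
  have h2 : Summable (fun n => aa n * y ^ n) := summable_aa (by rwa [abs_of_nonneg hy0])
  have h3 : ∀ n, 0 ≤ aa n * x ^ n := fun n => mul_nonneg (aa_pos n).le (pow_nonneg hx0 n)
  have h4 : ∀ n, 0 ≤ aa n * y ^ n := fun n => mul_nonneg (aa_pos n).le (pow_nonneg hy0 n)
  exact Summable.mul_of_nonneg h1 h2 h3 h4

lemma prod_series {x y t : ℝ} (hx0 : 0 ≤ x) (hx1 : x < 1) (hy0 : 0 ≤ y) (hy1 : y < 1)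
    (ht0 : 0 < t) (ht1 : t < 1) :
    Real.sqrt t * ((Real.sqrt (1 - x*t))⁻¹ * (Real.sqrt (1 - y*t))⁻¹)
      = ∑' p : ℕ × ℕ, aa p.1 * x ^ p.1 * (aa p.2 * y ^ p.2) * t ^ (p.1 + p.2) *
          Real.sqrt t := by
  have hxt0 : 0 ≤ x * t := by positivity
  have hxt1 : x * t < 1 := lt_of_le_of_lt (by nlinarith) hx1
  have hyt0 : 0 ≤ y * t := by positivity
  have hyt1 : y * t < 1 := lt_of_le_of_lt (by nlinarith) hy1
  rw [← binom_inv hxt0 hxt1, ← binom_inv hyt0 hyt1]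
  rw [Summable.tsum_mul_tsum (summable_aa (by rwa [abs_of_nonneg hxt0]))
    (summable_aa (by rwa [abs_of_nonneg hyt0]))
    (prod_summable hxt0 hxt1 hyt0 hyt1)]
  rw [← tsum_mul_left]
  apply tsum_congr
  intro p
  rw [mul_pow, mul_pow, pow_add]
  ring

lemma term_integral (C : ℝ) (k : ℕ) :
    ∫ t in Set.Ioo (0:ℝ) 1, C * t ^ k * Real.sqrt t = C / ((k:ℝ) + 3/2) := by
  rw [← integral_Ioc_eq_integral_Ioo, ← intervalIntegral.integral_of_le zero_le_one]
  have heq : Set.EqOn (fun t : ℝ => C * t ^ k * Real.sqrt t)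
      (fun t : ℝ => C * t ^ ((k:ℝ) + 1/2)) (Set.uIcc (0:ℝ) 1) := by
    intro t ht
    rw [Set.uIcc_of_le zero_le_one] at ht
    rcases eq_or_lt_of_le ht.1 with h | h
    · simp only [← h]
      rw [Real.sqrt_zero, Real.zero_rpow (by positivity : (k:ℝ) + 1/2 ≠ 0)]
      ring
    · simp only []
      rw [Real.sqrt_eq_rpow, ← Real.rpow_natCast t k, mul_assoc, ← Real.rpow_add h]
  rw [intervalIntegral.integral_congr heq]
  simp_rw [intervalIntegral.integral_const_mul]
  rw [integral_rpow (Or.inl (by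
    have : (0:ℝ) ≤ (k:ℝ) := Nat.cast_nonneg k
    linarith : (-1:ℝ) < (k:ℝ) + 1/2))]
  rw [Real.one_rpow, Real.zero_rpow (by positivity : ((k:ℝ) + 1/2 + 1) ≠ 0)]
  have hne : ((k:ℝ) + 1/2 + 1) ≠ 0 := by positivity
  have hne2 : ((k:ℝ) + 3/2) ≠ 0 := by positivity
  rw [sub_zero, mul_one_div, div_eq_div_iff hne hne2]
  ring

lemma swap_integral {x y : ℝ} (hx0 : 0 ≤ x) (hx1 : x < 1) (hy0 : 0 ≤ y) (hy1 : y < 1) :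
    ∫ t in Set.Ioo (0:ℝ) 1,
        Real.sqrt t * ((Real.sqrt (1 - x*t))⁻¹ * (Real.sqrt (1 - y*t))⁻¹)
      = ∑' p : ℕ × ℕ, aa p.1 * x ^ p.1 * (aa p.2 * y ^ p.2) / (((p.1:ℝ) + p.2) + 3/2) := by
  rw [setIntegral_congr_fun measurableSet_Ioo
    (fun t ht => prod_series hx0 hx1 hy0 hy1 ht.1 ht.2)]
  rw [integral_tsum]
  · apply tsum_congr
    intro p
    rw [term_integral]
    push_cast
    ring_nf
  · intro p
    apply Continuous.aestronglyMeasurable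
    exact (continuous_const.mul (continuous_pow _)).mul Real.continuous_sqrt
  · -- finiteness
    set d : ℕ × ℕ → ℝ := fun p => aa p.1 * x ^ p.1 * (aa p.2 * y ^ p.2) with hd
    have hdnn : ∀ p : ℕ × ℕ, 0 ≤ d p := fun p =>
      mul_nonneg (mul_nonneg (aa_pos p.1).le (pow_nonneg hx0 _))
        (mul_nonneg (aa_pos p.2).le (pow_nonneg hy0 _))
    have hds : Summable d := prod_summable hx0 hx1 hy0 hy1
    apply ne_top_of_le_ne_top (b := ENNReal.ofReal (∑' p, d p))
    · exact ENNReal.ofReal_ne_top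
    calc ∑' p : ℕ × ℕ, ∫⁻ t in Set.Ioo (0:ℝ) 1,
          ‖d p * t ^ (p.1 + p.2) * Real.sqrt t‖₊
        ≤ ∑' p : ℕ × ℕ, ENNReal.ofReal (d p) := by
          apply ENNReal.tsum_le_tsum
          intro p
          calc ∫⁻ t in Set.Ioo (0:ℝ) 1, ‖d p * t ^ (p.1 + p.2) * Real.sqrt t‖₊
              ≤ ∫⁻ _ in Set.Ioo (0:ℝ) 1, ENNReal.ofReal (d p) := by
                apply setLIntegral_mono measurable_const
                intro t ht
                rw [← enorm_eq_nnnorm, ← ofReal_norm]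
                apply ENNReal.ofReal_le_ofReal
                rw [Real.norm_eq_abs, abs_of_nonneg (mul_nonneg (mul_nonneg (hdnn p)
                  (pow_nonneg ht.1.le _)) (Real.sqrt_nonneg t))]
                have h1 : t ^ (p.1 + p.2) ≤ 1 :=
                  pow_le_one₀ ht.1.le ht.2.le
                have h2 : Real.sqrt t ≤ 1 := by
                  rw [show (1:ℝ) = Real.sqrt 1 by simp]
                  exact Real.sqrt_le_sqrt ht.2.le
                calc d p * t ^ (p.1 + p.2) * Real.sqrt t
                    ≤ d p * 1 * 1 := by
                      apply mul_le_mul (mul_le_mul le_rfl h1 (pow_nonneg ht.1.le _) (hdnn p)) h2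
                        (Real.sqrt_nonneg t) (by rw [mul_one]; exact hdnn p)
                  _ = d p := by ring
            _ = ENNReal.ofReal (d p) := by
                rw [setLIntegral_const, Real.volume_Ioo]
                simp
      _ = ENNReal.ofReal (∑' p, d p) :=
          (ENNReal.ofReal_tsum_of_nonneg hdnn hds).symm

lemma appell_eq (x y : ℝ) :
    appellF1 (3/2) (1/2) (1/2) (5/2) x y
      = (3/2) * ∑' p : ℕ × ℕ, aa p.1 * x ^ p.1 * (aa p.2 * y ^ p.2) /
          (((p.1:ℝ) + p.2) + 3/2) := by
  rw [appellF1, ← tsum_mul_left]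
  apply tsum_congr
  rintro ⟨m, n⟩
  simp only [aa]
  have hP5 : poch (5/2) (m+n) ≠ 0 := ne_of_gt (poch_pos (by norm_num) _)
  have hm : (m.factorial : ℝ) ≠ 0 := by positivity
  have hn : (n.factorial : ℝ) ≠ 0 := by positivity
  have hk : ((m:ℝ) + (n:ℝ) + 3/2) ≠ 0 := by positivity
  have key := poch_ratio (m+n)
  push_cast at key
  field_simp
  linear_combination (-(2:ℝ) * poch (1/2) m * poch (1/2) n * x ^ m * y ^ n) * key

lemma cov {a : ℝ} (ha : 0 < a) (G : ℝ → ℝ) :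
    ∫ u in Set.Ioi (0:ℝ), G u
      = ∫ t in Set.Ioo (0:ℝ) 1, |(-(a^2) / t^2)| • G (a^2/t - a^2) := by
  have himg : (fun t : ℝ => a^2/t - a^2) '' Set.Ioo 0 1 = Set.Ioi 0 := by
    ext u
    constructor
    · rintro ⟨t, ⟨ht0, ht1⟩, rfl⟩
      have h1 : a^2 < a^2/t := by
        rw [lt_div_iff₀ ht0]; nlinarith [mul_pos ha ha]
      simp only [Set.mem_Ioi]
      linarith
    · intro hu
      have hu' : (0:ℝ) < u := hu
      refine ⟨a^2/(a^2+u), ⟨by positivity, ?_⟩, ?_⟩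
      · rw [div_lt_one (by positivity)]; linarith
      · field_simp
        ring
  have hderiv : ∀ t ∈ Set.Ioo (0:ℝ) 1,
      HasDerivWithinAt (fun t : ℝ => a^2/t - a^2) (-(a^2) / t^2) (Set.Ioo 0 1) t := by
    intro t ht
    have ht0 : t ≠ 0 := ne_of_gt ht.1
    have h := ((hasDerivAt_inv ht0).const_mul (a^2)).sub_const (a^2)
    have he : a^2 * -(t^2)⁻¹ = -(a^2)/t^2 := by field_simp
    have h' : HasDerivAt (fun t : ℝ => a^2/t - a^2) (-(a^2)/t^2) t := by
      simpa [div_eq_mul_inv, he] using h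
    exact h'.hasDerivWithinAt
  have hinj : Set.InjOn (fun t : ℝ => a^2/t - a^2) (Set.Ioo 0 1) := by
    intro t1 h1 t2 h2 he
    simp only [] at he
    have h3 : a^2/t1 = a^2/t2 := by linarith
    have ha2 : a^2 ≠ 0 := by positivity
    have ht1 : t1 ≠ 0 := ne_of_gt h1.1
    have ht2 : t2 ≠ 0 := ne_of_gt h2.1
    field_simp at h3
    exact h3.symm
  rw [← himg, integral_image_eq_integral_abs_deriv_smul measurableSet_Ioo hderiv hinj]

lemma integrand_eq {a b c t : ℝ} (hc : 0 < c) (hcb : c ≤ b) (hba : b ≤ a)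
    (ht0 : 0 < t) (ht1 : t < 1) :
    |(-(a^2) / t^2)| • ((a^2 + (a^2/t - a^2)) *
        Real.sqrt ((a^2 + (a^2/t - a^2)) * (b^2 + (a^2/t - a^2)) * (c^2 + (a^2/t - a^2))))⁻¹
      = (1/a^3) * (Real.sqrt t * ((Real.sqrt (1 - (1 - b^2/a^2)*t))⁻¹ *
          (Real.sqrt (1 - (1 - c^2/a^2)*t))⁻¹)) := by
  have hb : 0 < b := lt_of_lt_of_le hc hcb
  have ha : 0 < a := lt_of_lt_of_le hb hba
  set x := 1 - b^2/a^2 with hxd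
  set y := 1 - c^2/a^2 with hyd
  have hx0 : 0 ≤ x := by
    rw [hxd]
    have h1 : b^2 ≤ a^2 := by nlinarith
    have h2 : b^2/a^2 ≤ 1 := by rw [div_le_one (by positivity)]; exact h1
    linarith
  have hx1 : x < 1 := by
    rw [hxd]
    have : 0 < b^2/a^2 := by positivity
    linarith
  have hy0 : 0 ≤ y := by
    rw [hyd]
    have h1 : c^2 ≤ a^2 := by nlinarith
    have h2 : c^2/a^2 ≤ 1 := by rw [div_le_one (by positivity)]; exact h1
    linarith
  have hy1 : y < 1 := by
    rw [hyd]
    have : 0 < c^2/a^2 := by positivity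
    linarith
  have hxt : 0 < 1 - x*t := by nlinarith
  have hyt : 0 < 1 - y*t := by nlinarith
  have h1 : a^2 + (a^2/t - a^2) = a^2/t := by ring
  have h2 : b^2 + (a^2/t - a^2) = a^2*(1 - x*t)/t := by
    rw [hxd]; field_simp; ring
  have h3 : c^2 + (a^2/t - a^2) = a^2*(1 - y*t)/t := by
    rw [hyd]; field_simp; ring
  rw [h1, h2, h3]
  have habs : |(-(a^2) / t^2)| = a^2/t^2 := by
    rw [abs_div, abs_neg, abs_pow, abs_pow, abs_of_pos ha, abs_of_pos ht0]
  rw [habs, smul_eq_mul]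
  have hs1 : Real.sqrt (a^2/t * (a^2*(1 - x*t)/t) * (a^2*(1 - y*t)/t))
      = (a/Real.sqrt t) * (a * Real.sqrt (1-x*t) / Real.sqrt t) *
        (a * Real.sqrt (1-y*t) / Real.sqrt t) := by
    rw [Real.sqrt_mul (by positivity) (a^2*(1 - y*t)/t),
        Real.sqrt_mul (by positivity) (a^2*(1 - x*t)/t)]
    rw [Real.sqrt_div (by positivity) t, Real.sqrt_sq ha.le]
    rw [show a^2*(1 - x*t) /t = a^2*(1 - x*t) * t⁻¹ by ring]
    rw [show a^2*(1 - y*t) /t = a^2*(1 - y*t) * t⁻¹ by ring]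
    rw [Real.sqrt_mul (by positivity) t⁻¹, Real.sqrt_mul (by positivity) (1 - x*t),
        Real.sqrt_mul (by positivity) t⁻¹, Real.sqrt_mul (by positivity) (1 - y*t),
        Real.sqrt_sq ha.le, Real.sqrt_inv]
    field_simp
  rw [hs1]
  have hst : Real.sqrt t ≠ 0 := ne_of_gt (Real.sqrt_pos.mpr ht0)
  have hsx : Real.sqrt (1-x*t) ≠ 0 := ne_of_gt (Real.sqrt_pos.mpr hxt)
  have hsy : Real.sqrt (1-y*t) ≠ 0 := ne_of_gt (Real.sqrt_pos.mpr hyt)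
  have htt : Real.sqrt t * Real.sqrt t = t := Real.mul_self_sqrt ht0.le
  have ht0' : t ≠ 0 := ne_of_gt ht0
  have ha' : a ≠ 0 := ne_of_gt ha
  field_simp
  ring_nf
  rw [Real.sq_sqrt ht0.le]

end Demag

/-- The demagnetizing integral `L` (divided by `πκ`) of the ellipsoid `a ≥ b ≥ c > 0`:
`abc·∫₀^∞ du/((a²+u)√((a²+u)(b²+u)(c²+u)))
  = (bc/a²)·(Γ(3/2)Γ(1)/Γ(5/2))·F₁(3/2;1/2,1/2;5/2;1-b²/a²,1-c²/a²)
  = (2bc/(3a²))·F₁(3/2;1/2,1/2;5/2;1-b²/a²,1-c²/a²)`. -/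
theorem demagnetizing_factor_L (a b c : ℝ) (hc : 0 < c) (hcb : c ≤ b) (hba : b ≤ a) :
    a * b * c * ∫ u in Set.Ioi (0:ℝ),
        ((a^2+u) * Real.sqrt ((a^2+u)*(b^2+u)*(c^2+u)))⁻¹
      = (b*c/a^2) * (Real.Gamma (3/2) * Real.Gamma 1 / Real.Gamma (5/2)) *
          appellF1 (3/2) (1/2) (1/2) (5/2) (1 - b^2/a^2) (1 - c^2/a^2) ∧
    a * b * c * ∫ u in Set.Ioi (0:ℝ),
        ((a^2+u) * Real.sqrt ((a^2+u)*(b^2+u)*(c^2+u)))⁻¹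
      = (2*b*c/(3*a^2)) *
          appellF1 (3/2) (1/2) (1/2) (5/2) (1 - b^2/a^2) (1 - c^2/a^2) := by
  have hb : 0 < b := lt_of_lt_of_le hc hcb
  have ha : 0 < a := lt_of_lt_of_le hb hba
  have hx0 : 0 ≤ 1 - b^2/a^2 := by
    have h1 : b^2 ≤ a^2 := by nlinarith
    have h2 : b^2/a^2 ≤ 1 := by rw [div_le_one (by positivity)]; exact h1
    linarith
  have hx1 : 1 - b^2/a^2 < 1 := by
    have : 0 < b^2/a^2 := by positivity
    linarith
  have hy0 : 0 ≤ 1 - c^2/a^2 := by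
    have h1 : c^2 ≤ a^2 := by nlinarith
    have h2 : c^2/a^2 ≤ 1 := by rw [div_le_one (by positivity)]; exact h1
    linarith
  have hy1 : 1 - c^2/a^2 < 1 := by
    have : 0 < c^2/a^2 := by positivity
    linarith
  have key2 : a * b * c * ∫ u in Set.Ioi (0:ℝ),
        ((a^2+u) * Real.sqrt ((a^2+u)*(b^2+u)*(c^2+u)))⁻¹
      = (2*b*c/(3*a^2)) *
          appellF1 (3/2) (1/2) (1/2) (5/2) (1 - b^2/a^2) (1 - c^2/a^2) := by
    have hcov := Demag.cov ha
      (fun u => ((a^2+u) * Real.sqrt ((a^2+u)*(b^2+u)*(c^2+u)))⁻¹)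
    rw [hcov]
    rw [setIntegral_congr_fun measurableSet_Ioo
      (fun t ht => Demag.integrand_eq hc hcb hba ht.1 ht.2)]
    rw [MeasureTheory.integral_const_mul]
    rw [Demag.swap_integral hx0 hx1 hy0 hy1]
    rw [Demag.appell_eq]
    field_simp
    ring
  refine ⟨?_, key2⟩
  rw [key2]
  have hg : Real.Gamma (3/2) * Real.Gamma 1 / Real.Gamma (5/2) = 2/3 := by
    rw [Real.Gamma_one, show (5/2:ℝ) = 3/2 + 1 by norm_num,
      Real.Gamma_add_one (by norm_num)]
    have h := Real.Gamma_pos_of_pos (show (0:ℝ) < 3/2 by norm_num)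
    field_simp
  rw [hg]
  ring
end
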